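/- arXiv:2507.06604 — 9 statements merged into one kernel-verified Lean document; each statement's English description precedes it below -/
import Mathlib

section
/- det A' = τ^{n-1}·(2τ − τ₀), where det A' is the determinant of the 2n×2n matrix A'. -/
set_option maxHeartbeats 1600000

open Matrix

lemma vmv_mul {n : ℕ} (u v p q : Fin n → ℂ) :
    Matrix.vecMulVec u v * Matrix.vecMulVec p q
      = (∑ i, v i * p i) • Matrix.vecMulVec u q := by
  ext i j
  simp only [Matrix.mul_apply, Matrix.vecMulVec_apply, Matrix.smul_apply, smul_eq_mul,
    Finset.sum_mul]
  exact Finset.sum_congr rfl fun k _ => by ring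

lemma smul_one_add_mul {k : Type*} [Fintype k] [DecidableEq k] (α : ℂ) (hα : α ≠ 0)
    (U : Matrix k (Fin 2) ℂ) (V : Matrix (Fin 2) k ℂ) :
    α • (1 : Matrix k k ℂ) + U * V = α • (1 + (α⁻¹ • U) * V) := by
  rw [smul_add, Matrix.smul_mul, smul_smul, mul_inv_cancel₀ hα, one_smul]

theorem aux {n : ℕ} (hn : 1 ≤ n) (z ξ zc ξc : Fin n → ℂ) (s c c' s' ψ₁ ψ₂ : ℂ)
    (hψ₁ : ψ₁ ≠ 0) (hψ₂ : ψ₂ ≠ 0)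
    (hzz : ∑ i, zc i * z i = ψ₁ - 1)
    (hzz' : ∑ i, z i * zc i = ψ₁ - 1)
    (hξξ : ∑ i, ξ i * ξc i = ψ₂ - c' * c)
    (hξξ' : ∑ i, ξc i * ξ i = ψ₂ - c' * c)
    (hξz : ∑ i, ξ i * z i = s - c)
    (hξz' : ∑ i, z i * ξ i = s - c)
    (hzξ : ∑ i, zc i * ξc i = s' - c')
    (hzξ' : ∑ i, ξc i * zc i = s' - c') :
    (Matrix.fromBlocks
      (ψ₂ • 1 - c • vecMulVec zc ξc - c' • vecMulVec ξ z + ψ₁ • vecMulVec ξ ξc)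
      (ψ₁ • vecMulVec ξ zc + vecMulVec zc ξ - c • vecMulVec zc zc)
      (ψ₁ • vecMulVec z ξc + vecMulVec ξc z - c' • vecMulVec z z)
      (ψ₁ • (1 + vecMulVec z zc))).det
      = (ψ₁ * ψ₂) ^ (n - 1) * (2 * (ψ₁ * ψ₂) - s' * s) := by
  obtain ⟨m, rfl⟩ : ∃ m, n = m + 1 := ⟨n - 1, (Nat.succ_pred_eq_of_pos hn).symm⟩
  simp only [Nat.add_sub_cancel]
  have hα : (ψ₁ * ψ₁ * ψ₂ : ℂ) ≠ 0 := mul_ne_zero (mul_ne_zero hψ₁ hψ₁) hψ₂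
  set a11 : Matrix (Fin (m + 1)) (Fin (m + 1)) ℂ :=
    ψ₂ • 1 - c • vecMulVec zc ξc - c' • vecMulVec ξ z + ψ₁ • vecMulVec ξ ξc with ha11
  set a12 : Matrix (Fin (m + 1)) (Fin (m + 1)) ℂ :=
    ψ₁ • vecMulVec ξ zc + vecMulVec zc ξ - c • vecMulVec zc zc with ha12
  set a21 : Matrix (Fin (m + 1)) (Fin (m + 1)) ℂ :=
    ψ₁ • vecMulVec z ξc + vecMulVec ξc z - c' • vecMulVec z z with ha21
  set a22 : Matrix (Fin (m + 1)) (Fin (m + 1)) ℂ := ψ₁ • (1 + vecMulVec z zc) with ha22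
  set X' : Matrix (Fin (m + 1)) (Fin (m + 1)) ℂ := (vecMulVec z zc - ψ₁ • 1) * a21 with hX
  -- bottom-left block vanishes
  have hBL : a21 * ((ψ₁ * ψ₁) • 1) + a22 * X' = 0 := by
    rw [hX, ha21, ha22]
    simp only [mul_sub, mul_add, sub_mul, add_mul, Matrix.smul_mul, Matrix.mul_smul,
      Matrix.mul_one, Matrix.one_mul, vmv_mul, hzz, hzz', hξξ, hξξ', hξz, hξz', hzξ, hzξ',
      smul_smul, smul_add, smul_sub]
    match_scalars <;> ring
  have key : fromBlocks a11 a12 a21 a22 * fromBlocks ((ψ₁ * ψ₁) • 1) 0 X' 1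
      = fromBlocks (a11 * ((ψ₁ * ψ₁) • 1) + a12 * X') a12 0 a22 := by
    rw [Matrix.fromBlocks_multiply]
    rw [hBL]
    simp
  -- determinant of a22
  have h22 : a22.det = ψ₁ ^ (m + 1 + 1) := by
    rw [ha22, Matrix.det_smul, Fintype.card_fin]
    have hv : vecMulVec z zc
        = (Matrix.of fun i (_ : Fin 1) => z i) * (Matrix.of fun (_ : Fin 1) j => zc j) := by
      ext i j
      simp [Matrix.mul_apply, Matrix.vecMulVec_apply]
    rw [hv, Matrix.det_one_add_mul_comm, Matrix.det_fin_one]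
    have h1 : ((1 : Matrix (Fin 1) (Fin 1) ℂ)
        + (Matrix.of fun (_ : Fin 1) j => zc j) * (Matrix.of fun i (_ : Fin 1) => z i)) 0 0
        = ψ₁ := by
      simp [Matrix.mul_apply, Matrix.one_apply, hzz]
    rw [h1]; ring
  -- the scaled Schur complement
  set Cu : Matrix (Fin (m + 1)) (Fin 2) ℂ := Matrix.of fun i j => ![ξ i, zc i] j with hCu
  set Rv : Matrix (Fin 2) (Fin (m + 1)) ℂ := Matrix.of fun j i =>
    ![ψ₁ * ψ₁ * ξc i - s' * ψ₁ * z i,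
      -(s * ψ₁) * ξc i + (s' * s - ψ₂ * ψ₁) * z i] j with hRv
  have hCR : Cu * Rv = (ψ₁ * ψ₁) • vecMulVec ξ ξc - (s' * ψ₁) • vecMulVec ξ z
      - (s * ψ₁) • vecMulVec zc ξc + (s' * s - ψ₂ * ψ₁) • vecMulVec zc z := by
    ext i j
    simp [Matrix.mul_apply, Fin.sum_univ_two, Matrix.vecMulVec_apply, hCu, hRv]
    ring
  have hTL : a11 * ((ψ₁ * ψ₁) • 1) + a12 * X' = (ψ₁ * ψ₁ * ψ₂) • 1 + Cu * Rv := by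
    rw [hX, ha11, ha12, ha21, hCR]
    simp only [mul_sub, mul_add, sub_mul, add_mul, Matrix.smul_mul, Matrix.mul_smul,
      Matrix.mul_one, Matrix.one_mul, vmv_mul, hzz, hzz', hξξ, hξξ', hξz, hξz', hzξ, hzξ',
      smul_smul, smul_add, smul_sub]
    match_scalars <;> ring
  -- entries of Rv * Cu
  have hA : (Rv * Cu) 0 0 = ψ₁ * ψ₁ * (ψ₂ - c' * c) - s' * ψ₁ * (s - c) := by
    have h : ∀ x, Rv 0 x * Cu x 0
        = ψ₁ * ψ₁ * (ξc x * ξ x) - s' * ψ₁ * (z x * ξ x) := by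
      intro x; simp [hCu, hRv]; ring
    rw [Matrix.mul_apply, Finset.sum_congr rfl fun x _ => h x, Finset.sum_sub_distrib,
      ← Finset.mul_sum, ← Finset.mul_sum, hξξ', hξz']
  have hB : (Rv * Cu) 0 1 = ψ₁ * ψ₁ * (s' - c') - s' * ψ₁ * (ψ₁ - 1) := by
    have h : ∀ x, Rv 0 x * Cu x 1
        = ψ₁ * ψ₁ * (ξc x * zc x) - s' * ψ₁ * (z x * zc x) := by
      intro x; simp [hCu, hRv]; ring
    rw [Matrix.mul_apply, Finset.sum_congr rfl fun x _ => h x, Finset.sum_sub_distrib,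
      ← Finset.mul_sum, ← Finset.mul_sum, hzξ', hzz']
  have hC : (Rv * Cu) 1 0 = -(s * ψ₁) * (ψ₂ - c' * c) + (s' * s - ψ₂ * ψ₁) * (s - c) := by
    have h : ∀ x, Rv 1 x * Cu x 0
        = -(s * ψ₁) * (ξc x * ξ x) + (s' * s - ψ₂ * ψ₁) * (z x * ξ x) := by
      intro x; simp [hCu, hRv]; ring
    rw [Matrix.mul_apply, Finset.sum_congr rfl fun x _ => h x, Finset.sum_add_distrib,
      ← Finset.mul_sum, ← Finset.mul_sum, hξξ', hξz']
  have hD : (Rv * Cu) 1 1 = -(s * ψ₁) * (s' - c') + (s' * s - ψ₂ * ψ₁) * (ψ₁ - 1) := by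
    have h : ∀ x, Rv 1 x * Cu x 1
        = -(s * ψ₁) * (ξc x * zc x) + (s' * s - ψ₂ * ψ₁) * (z x * zc x) := by
      intro x; simp [hCu, hRv]; ring
    rw [Matrix.mul_apply, Finset.sum_congr rfl fun x _ => h x, Finset.sum_add_distrib,
      ← Finset.mul_sum, ← Finset.mul_sum, hzξ', hzz']
  have hdet2 : ((1 : Matrix (Fin 2) (Fin 2) ℂ) + Rv * ((ψ₁ * ψ₁ * ψ₂)⁻¹ • Cu)).det
      = (2 * (ψ₁ * ψ₂) - s' * s) * (ψ₁ * ψ₁ * ψ₂)⁻¹ := by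
    rw [Matrix.mul_smul, Matrix.det_fin_two]
    simp only [Matrix.add_apply, Matrix.one_apply_eq, Matrix.one_apply_ne (by decide : (0 : Fin 2) ≠ 1),
      Matrix.one_apply_ne (by decide : (1 : Fin 2) ≠ 0), Matrix.smul_apply, smul_eq_mul,
      hA, hB, hC, hD]
    linear_combination (((2 * (ψ₁ * ψ₂) - s' * s - ψ₁ * ψ₁ * ψ₂
        - ((ψ₁ * ψ₁ * (ψ₂ - c' * c) - s' * ψ₁ * (s - c))
          + (-(s * ψ₁) * (s' - c') + (s' * s - ψ₂ * ψ₁) * (ψ₁ - 1))))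
        * (ψ₁ * ψ₁ * ψ₂)⁻¹ - 1)) * (mul_inv_cancel₀ hα)
  have hTLdet : (a11 * ((ψ₁ * ψ₁) • 1) + a12 * X').det
      = (ψ₁ * ψ₁ * ψ₂) ^ (m + 1) * ((2 * (ψ₁ * ψ₂) - s' * s) * (ψ₁ * ψ₁ * ψ₂)⁻¹) := by
    rw [hTL, smul_one_add_mul _ hα Cu Rv, Matrix.det_smul, Fintype.card_fin,
      Matrix.det_one_add_mul_comm, Matrix.mul_smul, ← Matrix.mul_smul, hdet2]
  -- assemble
  have hN : (fromBlocks ((ψ₁ * ψ₁) • (1 : Matrix (Fin (m + 1)) (Fin (m + 1)) ℂ)) 0 X' 1).det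
      = (ψ₁ * ψ₁) ^ (m + 1) := by
    simp [Matrix.det_fromBlocks_zero₁₂, Matrix.det_smul]
  have hMN : (fromBlocks a11 a12 a21 a22).det * (ψ₁ * ψ₁) ^ (m + 1)
      = (a11 * ((ψ₁ * ψ₁) • 1) + a12 * X').det * a22.det := by
    rw [← hN, ← Matrix.det_mul, key, Matrix.det_fromBlocks_zero₂₁]
  apply mul_right_cancel₀ (pow_ne_zero (m + 1) (mul_ne_zero hψ₁ hψ₁))
  rw [hMN, hTLdet, h22]
  linear_combination ((ψ₁ * ψ₁ * ψ₂) ^ m * (2 * (ψ₁ * ψ₂) - s' * s) * ψ₁ ^ (m + 2))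
    * (mul_inv_cancel₀ hα)

theorem stmt_0 (n : ℕ) (hn : 1 ≤ n) (s : ℂ) (z ξ : Fin n → ℂ) :
    let sxz : ℂ := s - ∑ i, ξ i * z i
    let ψ₁r : ℝ := (∑ i, Complex.normSq (z i)) + 1
    let ψ₂r : ℝ := (∑ i, Complex.normSq (ξ i)) + Complex.normSq sxz
    let τr : ℝ := ψ₁r * ψ₂r
    let τ₀r : ℝ := Complex.normSq s
    let ψ₁ : ℂ := (ψ₁r : ℂ)
    let ψ₂ : ℂ := (ψ₂r : ℂ)
    let τ : ℂ := (τr : ℂ)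
    let τ₀ : ℂ := (τ₀r : ℂ)
    let a11 : Matrix (Fin n) (Fin n) ℂ :=
      ψ₂ • 1 - sxz • Matrix.vecMulVec (star z) (star ξ)
        - star sxz • Matrix.vecMulVec ξ z + ψ₁ • Matrix.vecMulVec ξ (star ξ)
    let a12 : Matrix (Fin n) (Fin n) ℂ :=
      ψ₁ • Matrix.vecMulVec ξ (star z) + Matrix.vecMulVec (star z) ξ
        - sxz • Matrix.vecMulVec (star z) (star z)
    let a21 : Matrix (Fin n) (Fin n) ℂ :=
      ψ₁ • Matrix.vecMulVec z (star ξ) + Matrix.vecMulVec (star ξ) z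
        - star sxz • Matrix.vecMulVec z z
    let a22 : Matrix (Fin n) (Fin n) ℂ := ψ₁ • (1 + Matrix.vecMulVec z (star z))
    let A' : Matrix (Fin n ⊕ Fin n) (Fin n ⊕ Fin n) ℂ := Matrix.fromBlocks a11 a12 a21 a22
    let b : Fin n ⊕ Fin n → ℂ :=
      Sum.elim (fun i => ψ₂ * star (z i) - ψ₁ * star sxz * ξ i)
               (fun i => ψ₁ * (star (ξ i) - star sxz * z i))
    A'.det = τ ^ (n - 1) * (2 * τ - τ₀) := by
  intro sxz ψ₁r ψ₂r τr τ₀r ψ₁ ψ₂ τ τ₀ a11 a12 a21 a22 A' b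
  have hsxz : sxz = s - ∑ i, ξ i * z i := rfl
  have hψ₁pos : 0 < ψ₁r :=
    add_pos_of_nonneg_of_pos (Finset.sum_nonneg fun i _ => Complex.normSq_nonneg _) one_pos
  have hψ₁0 : ψ₁ ≠ 0 := Complex.ofReal_ne_zero.mpr (ne_of_gt hψ₁pos)
  by_cases hc : ψ₂r = 0
  · -- degenerate case : ξ = 0, sxz = 0, s = 0
    have hge : 0 ≤ ∑ i, Complex.normSq (ξ i) :=
      Finset.sum_nonneg fun i _ => Complex.normSq_nonneg _
    have hge2 : 0 ≤ Complex.normSq sxz := Complex.normSq_nonneg _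
    have hc' : (∑ i, Complex.normSq (ξ i)) + Complex.normSq sxz = 0 := hc
    have hsxz0 : sxz = 0 := by
      rw [← Complex.normSq_eq_zero]; linarith
    have hξsum : ∑ i, Complex.normSq (ξ i) = 0 := by linarith
    have hξ0 : ∀ i, ξ i = 0 := by
      intro i
      have := (Finset.sum_eq_zero_iff_of_nonneg
        (fun i _ => Complex.normSq_nonneg (ξ i))).mp hξsum i (Finset.mem_univ i)
      exact Complex.normSq_eq_zero.mp this
    have hs0 : s = 0 := by
      have : ∑ i, ξ i * z i = 0 := Finset.sum_eq_zero fun i _ => by rw [hξ0 i, zero_mul]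
      have h2 := hsxz
      rw [this, sub_zero] at h2
      rw [← h2, hsxz0]
    have hdet0 : A'.det = 0 := by
      apply Matrix.det_eq_zero_of_row_eq_zero (Sum.inl ⟨0, hn⟩)
      intro j
      have hψ₂0 : ψ₂ = 0 := by simp [ψ₂, hc]
      rcases j with j | j
      · show a11 (⟨0, hn⟩ : Fin n) j = 0
        simp [a11, Matrix.vecMulVec_apply, hψ₂0, hsxz0, hξ0]
      · show a12 (⟨0, hn⟩ : Fin n) j = 0
        simp [a12, Matrix.vecMulVec_apply, hsxz0, hξ0]
    have hrhs : τ ^ (n - 1) * (2 * τ - τ₀) = 0 := by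
      have hτ : τ = 0 := by simp [τ, τr, hc]
      have hτ₀ : τ₀ = 0 := by simp [τ₀, τ₀r, hs0]
      rw [hτ, hτ₀]
      ring
    rw [hdet0, hrhs]
  · -- main case
    have hψ₂0 : ψ₂ ≠ 0 := Complex.ofReal_ne_zero.mpr hc
    have h1 : ∑ i, (star z) i * z i = ψ₁ - 1 := by
      have : ψ₁ = (∑ i, ((Complex.normSq (z i) : ℂ))) + 1 := by
        simp [ψ₁, ψ₁r]
      rw [this]
      simp [Complex.normSq_eq_conj_mul_self, Complex.star_def]
    have h1' : ∑ i, z i * (star z) i = ψ₁ - 1 := by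
      rw [← h1]; exact Finset.sum_congr rfl fun i _ => mul_comm _ _
    have h2 : ∑ i, ξ i * (star ξ) i = ψ₂ - star sxz * sxz := by
      have : ψ₂ = (∑ i, ((Complex.normSq (ξ i) : ℂ))) + star sxz * sxz := by
        simp [ψ₂, ψ₂r, Complex.normSq_eq_conj_mul_self, Complex.star_def]
      rw [this]
      simp [Complex.normSq_eq_conj_mul_self, Complex.star_def, mul_comm]
    have h2' : ∑ i, (star ξ) i * ξ i = ψ₂ - star sxz * sxz := by
      rw [← h2]; exact Finset.sum_congr rfl fun i _ => mul_comm _ _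
    have h3 : ∑ i, ξ i * z i = s - sxz := by rw [hsxz]; ring
    have h3' : ∑ i, z i * ξ i = s - sxz := by
      rw [← h3]; exact Finset.sum_congr rfl fun i _ => mul_comm _ _
    have h4 : ∑ i, (star z) i * (star ξ) i = star s - star sxz := by
      have : ∑ i, (star z) i * (star ξ) i = star (∑ i, ξ i * z i) := by
        rw [star_sum]
        exact Finset.sum_congr rfl fun i _ => by simp [mul_comm]
      rw [this, h3, star_sub]
    have h4' : ∑ i, (star ξ) i * (star z) i = star s - star sxz := by
      rw [← h4]; exact Finset.sum_congr rfl fun i _ => mul_comm _ _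
    have hτ : τ = ψ₁ * ψ₂ := by
      simp [τ, τr, ψ₁, ψ₂]
    have hτ₀ : τ₀ = star s * s := by
      simp [τ₀, τ₀r, Complex.normSq_eq_conj_mul_self, Complex.star_def]
    rw [hτ, hτ₀]
    exact aux hn z ξ (star z) (star ξ) s sxz (star sxz) (star s) ψ₁ ψ₂ hψ₁0 hψ₂0
      h1 h1' h2 h2' h3 h3' h4 h4'
end

section
/- The function f(t) = ( (a + (t − τ₀)ⁿ)^{1/n} / ( t·(t − τ₀) ) )^{1/2} is differentiable on the interval (τ₀, ∞), and for every t > τ₀ it satisfies the ordinary differential equation 2·f'(t)·f(t)^{2n−1}·tⁿ·(t − τ₀) + f(t)^{2n}·t^{n−1}·(2t − τ₀) = 1. -/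
theorem stmt_3 (n : ℕ) (hn : 1 ≤ n) (τ₀ : ℝ) (hτ₀ : 0 < τ₀) (a : ℝ) (ha : 0 ≤ a) :
    let f : ℝ → ℝ := fun t =>
      Real.sqrt ((a + (t - τ₀) ^ n) ^ ((1 : ℝ) / n) / (t * (t - τ₀)))
    ∀ t : ℝ, τ₀ < t →
      DifferentiableAt ℝ f t ∧
        2 * deriv f t * f t ^ (2 * n - 1) * t ^ n * (t - τ₀)
          + f t ^ (2 * n) * t ^ (n - 1) * (2 * t - τ₀) = 1 := by
  intro f t ht
  obtain ⟨m, rfl⟩ : ∃ m, n = m + 1 := ⟨n - 1, (Nat.succ_pred_eq_of_pos hn).symm⟩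
  have h1 : 0 < t := hτ₀.trans ht
  have h2 : 0 < t - τ₀ := sub_pos.mpr ht
  have hNne : ((m + 1 : ℕ) : ℝ) ≠ 0 := by positivity
  have hu : 0 < a + (t - τ₀) ^ (m + 1) := by positivity
  have hw : 0 < t * (t - τ₀) := mul_pos h1 h2
  set u : ℝ := a + (t - τ₀) ^ (m + 1) with hu_def
  set A : ℝ := u ^ ((1 : ℝ) / (m + 1 : ℕ)) with hA_def
  set B : ℝ := u ^ ((1 : ℝ) / (m + 1 : ℕ) - 1) with hB_def
  set w : ℝ := t * (t - τ₀) with hw_def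
  have hU : HasDerivAt (fun s => a + (s - τ₀) ^ (m + 1))
      (((m + 1 : ℕ) : ℝ) * (t - τ₀) ^ m) t := by
    have h := (((hasDerivAt_id t).sub_const τ₀).pow (m + 1)).const_add a
    simpa using h
  have hV : HasDerivAt (fun s => (a + (s - τ₀) ^ (m + 1)) ^ ((1 : ℝ) / (m + 1 : ℕ)))
      (((m + 1 : ℕ) : ℝ) * (t - τ₀) ^ m * ((1 : ℝ) / (m + 1 : ℕ)) * B) t := by
    have := hU.rpow_const (p := (1 : ℝ) / (m + 1 : ℕ)) (Or.inl hu.ne')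
    simpa [hB_def, hu_def] using this
  have hW : HasDerivAt (fun s => s * (s - τ₀)) (1 * (t - τ₀) + t * 1) t :=
    (hasDerivAt_id t).mul ((hasDerivAt_id t).sub_const τ₀)
  have hG : HasDerivAt
      (fun s => (a + (s - τ₀) ^ (m + 1)) ^ ((1 : ℝ) / (m + 1 : ℕ)) / (s * (s - τ₀)))
      ((((m + 1 : ℕ) : ℝ) * (t - τ₀) ^ m * ((1 : ℝ) / (m + 1 : ℕ)) * B * w
        - A * (1 * (t - τ₀) + t * 1)) / w ^ 2) t :=
    hV.div hW hw.ne'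
  have hg : 0 < A / w := div_pos (Real.rpow_pos_of_pos hu _) hw
  have hF : HasDerivAt f
      (((((m + 1 : ℕ) : ℝ) * (t - τ₀) ^ m * ((1 : ℝ) / (m + 1 : ℕ)) * B * w
        - A * (1 * (t - τ₀) + t * 1)) / w ^ 2) / (2 * Real.sqrt (A / w))) t := by
    have h := hG.sqrt hg.ne'
    exact h
  refine ⟨hF.differentiableAt, ?_⟩
  rw [hF.deriv]
  have hft : f t = Real.sqrt (A / w) := rfl
  rw [hft]
  set s : ℝ := Real.sqrt (A / w) with hs_def
  have hs : 0 < s := Real.sqrt_pos.mpr hg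
  have hs2 : s ^ 2 = A / w := Real.sq_sqrt hg.le
  have hAN : A ^ (m + 1) = u := by
    rw [hA_def, ← Real.rpow_natCast (u ^ ((1 : ℝ) / (m + 1 : ℕ))) (m + 1),
      ← Real.rpow_mul hu.le, one_div_mul_cancel hNne, Real.rpow_one]
  have hBA : B * A ^ m = 1 := by
    rw [hA_def, hB_def, ← Real.rpow_natCast (u ^ ((1 : ℝ) / (m + 1 : ℕ))) m,
      ← Real.rpow_mul hu.le, ← Real.rpow_add hu]
    have he : (1 : ℝ) / (m + 1 : ℕ) - 1 + 1 / (m + 1 : ℕ) * m = 0 := by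
      field_simp
      push_cast; ring
    rw [he, Real.rpow_zero]
  have hAm : A * A ^ m = u := by rw [← pow_succ']; exact hAN
  have hsub1 : 2 * (m + 1) - 1 = 2 * m + 1 := by omega
  have hsub2 : m + 1 - 1 = m := by omega
  rw [hsub1, hsub2]
  have hpow1 : s ^ (2 * m + 1) = (A / w) ^ m * s := by
    rw [pow_succ, pow_mul, hs2]
  have hpow2 : s ^ (2 * (m + 1)) = (A / w) ^ (m + 1) := by
    rw [pow_mul, hs2]
  rw [hpow1, hpow2]
  have key : ((((m + 1 : ℕ) : ℝ) * (t - τ₀) ^ m * ((1 : ℝ) / (m + 1 : ℕ)) * B * w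
        - A * (1 * (t - τ₀) + t * 1)) / w ^ 2)
      * (A / w) ^ m * t ^ (m + 1) * (t - τ₀) + (A / w) ^ (m + 1) * t ^ m * (2 * t - τ₀) = 1 := by
    have hmp : (t * (t - τ₀)) ^ m = t ^ m * (t - τ₀) ^ m := mul_pow t (t - τ₀) m
    have hP : A ^ m ≠ 0 := right_ne_zero_of_mul_eq_one hBA
    have hB : B = (A ^ m)⁻¹ := eq_inv_of_mul_eq_one_left hBA
    have ht0 : t ≠ 0 := h1.ne'
    have hd0 : t - τ₀ ≠ 0 := h2.ne'
    clear_value s w B A u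
    subst hw_def
    subst hB
    simp only [div_pow, mul_pow]
    field_simp
    ring
  have hh : ∀ D : ℝ, 2 * (D / (2 * s)) * ((A / w) ^ m * s) = D * (A / w) ^ m := by
    intro D
    field_simp
  rw [hh]
  exact key
end

section
/- Assume s ≠ 0 (so that τ ≥ τ₀ = |s|² > 0). Then the 2n×2n matrix A = τ^{−1/2}·A' − (1/2)·τ^{−3/2}·(b·b*) satisfies Aᵀ·S·A = S, i.e. A belongs to the complex symplectic group Sp(2n, ℂ). (This is the value c·A' + c₁·b·b* for c = f(τ), c₁ = f'(τ) with f(t) = t^{−1/2}, and expresses that the corresponding Ricci-flat Kähler metric is hyperkähler.) -/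
open Matrix

private lemma vvmul {n : ℕ} (u v w x : Fin n → ℂ) :
    vecMulVec u v * vecMulVec w x = (v ⬝ᵥ w) • vecMulVec u x := by
  ext i j
  simp only [Matrix.mul_apply, Matrix.vecMulVec_apply, Matrix.smul_apply, dotProduct,
    smul_eq_mul, Finset.sum_mul]
  exact Finset.sum_congr rfl fun k _ => by ring

private lemma vvT {n : ℕ} (u v : Fin n → ℂ) : (vecMulVec u v)ᵀ = vecMulVec v u := by
  ext i j; simp [Matrix.vecMulVec_apply, mul_comm]

private lemma vvElim {n : ℕ} (u1 u2 v1 v2 : Fin n → ℂ) :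
    vecMulVec (Sum.elim u1 u2) (Sum.elim v1 v2) =
      fromBlocks (vecMulVec u1 v1) (vecMulVec u1 v2) (vecMulVec u2 v1) (vecMulVec u2 v2) := by
  ext (i | i) (j | j) <;> simp [Matrix.vecMulVec_apply, Matrix.fromBlocks]

private lemma fromBlocks_sub {n : ℕ} (a b c d a' b' c' d' : Matrix (Fin n) (Fin n) ℂ) :
    fromBlocks a b c d - fromBlocks a' b' c' d' =
      fromBlocks (a - a') (b - b') (c - c') (d - d') := by
  ext (i | i) (j | j) <;> simp [Matrix.fromBlocks]

set_option maxHeartbeats 2000000 in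
private lemma key {n : ℕ} (z zb x xb : Fin n → ℂ) (sxz csxz p1 p2 : ℂ)
    (A' BM S : Matrix (Fin n ⊕ Fin n) (Fin n ⊕ Fin n) ℂ)
    (hA' : A' = fromBlocks
      (p2 • 1 - sxz • vecMulVec zb xb - csxz • vecMulVec x z + p1 • vecMulVec x xb)
      (p1 • vecMulVec x zb + vecMulVec zb x - sxz • vecMulVec zb zb)
      (p1 • vecMulVec z xb + vecMulVec xb z - csxz • vecMulVec z z)
      (p1 • (1 + vecMulVec z zb)))
    (hBM : BM = vecMulVec
      (Sum.elim (fun i => p2 * zb i - p1 * csxz * x i) (fun i => p1 * (xb i - csxz * z i)))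
      (Sum.elim (fun i => p2 * z i - p1 * sxz * xb i) (fun i => p1 * (x i - sxz * zb i))))
    (hS : S = fromBlocks 0 1 (-1) 0)
    (hz : z ⬝ᵥ zb = p1 - 1) (hz' : zb ⬝ᵥ z = p1 - 1)
    (hx : x ⬝ᵥ xb = p2 - sxz * csxz) (hx' : xb ⬝ᵥ x = p2 - sxz * csxz) :
    (p1 * p2) ^ 2 • (A'ᵀ * S * A')
      - ((p1 * p2) / 2) • (A'ᵀ * S * BM + BMᵀ * S * A')
      + (4 : ℂ)⁻¹ • (BMᵀ * S * BM) = (p1 * p2) ^ 3 • S := by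
  subst hA' hBM hS
  rw [vvElim]
  have e11 : vecMulVec (fun i => p2 * zb i - p1 * csxz * x i)
      (fun i => p2 * z i - p1 * sxz * xb i)
      = (p2 * p2) • vecMulVec zb z - (p2 * (p1 * sxz)) • vecMulVec zb xb
        - (p1 * csxz * p2) • vecMulVec x z + (p1 * csxz * (p1 * sxz)) • vecMulVec x xb := by
    ext i j
    simp only [Matrix.vecMulVec_apply, Matrix.sub_apply, Matrix.add_apply, Matrix.smul_apply,
      smul_eq_mul]
    ring
  have e12 : vecMulVec (fun i => p2 * zb i - p1 * csxz * x i)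
      (fun i => p1 * (x i - sxz * zb i))
      = (p2 * p1) • vecMulVec zb x - (p2 * (p1 * sxz)) • vecMulVec zb zb
        - (p1 * csxz * p1) • vecMulVec x x + (p1 * csxz * (p1 * sxz)) • vecMulVec x zb := by
    ext i j
    simp only [Matrix.vecMulVec_apply, Matrix.sub_apply, Matrix.add_apply, Matrix.smul_apply,
      smul_eq_mul]
    ring
  have e21 : vecMulVec (fun i => p1 * (xb i - csxz * z i))
      (fun i => p2 * z i - p1 * sxz * xb i)
      = (p1 * p2) • vecMulVec xb z - (p1 * (p1 * sxz)) • vecMulVec xb xb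
        - (p1 * csxz * p2) • vecMulVec z z + (p1 * csxz * (p1 * sxz)) • vecMulVec z xb := by
    ext i j
    simp only [Matrix.vecMulVec_apply, Matrix.sub_apply, Matrix.add_apply, Matrix.smul_apply,
      smul_eq_mul]
    ring
  have e22 : vecMulVec (fun i => p1 * (xb i - csxz * z i))
      (fun i => p1 * (x i - sxz * zb i))
      = (p1 * p1) • vecMulVec xb x - (p1 * (p1 * sxz)) • vecMulVec xb zb
        - (p1 * csxz * p1) • vecMulVec z x + (p1 * csxz * (p1 * sxz)) • vecMulVec z zb := by
    ext i j
    simp only [Matrix.vecMulVec_apply, Matrix.sub_apply, Matrix.add_apply, Matrix.smul_apply,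
      smul_eq_mul]
    ring
  rw [e11, e12, e21, e22]
  simp only [fromBlocks_transpose, transpose_add, transpose_sub, transpose_smul, transpose_one,
    vvT, fromBlocks_multiply, fromBlocks_add, fromBlocks_sub, fromBlocks_smul]
  rw [fromBlocks_inj]
  refine ⟨?_, ?_, ?_, ?_⟩ <;>
  · simp only [add_mul, sub_mul, mul_add, mul_sub, neg_mul, mul_neg, smul_mul_assoc,
      mul_smul_comm, vvmul, Matrix.one_mul, Matrix.mul_one, Matrix.mul_zero, Matrix.zero_mul,
      smul_smul, smul_add, smul_sub, smul_neg, smul_zero, add_zero, zero_add, sub_zero, zero_sub,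
      neg_neg, neg_smul, neg_add, neg_sub]
    have c1 : xb ⬝ᵥ zb = zb ⬝ᵥ xb := dotProduct_comm _ _
    have c2 : x ⬝ᵥ z = z ⬝ᵥ x := dotProduct_comm _ _
    have c3 : xb ⬝ᵥ z = z ⬝ᵥ xb := dotProduct_comm _ _
    have c4 : x ⬝ᵥ zb = zb ⬝ᵥ x := dotProduct_comm _ _
    simp only [hz, hz', hx, hx', c1, c2, c3, c4]
    match_scalars <;> ring

set_option maxHeartbeats 1000000 in
theorem stmt_7 (n : ℕ) (hn : 1 ≤ n) (s : ℂ) (hs : s ≠ 0) (z ξ : Fin n → ℂ) :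
    let sxz : ℂ := s - ∑ i, ξ i * z i
    let ψ₁r : ℝ := (∑ i, Complex.normSq (z i)) + 1
    let ψ₂r : ℝ := (∑ i, Complex.normSq (ξ i)) + Complex.normSq sxz
    let τr : ℝ := ψ₁r * ψ₂r
    let τ₀r : ℝ := Complex.normSq s
    let ψ₁ : ℂ := (ψ₁r : ℂ)
    let ψ₂ : ℂ := (ψ₂r : ℂ)
    let τ : ℂ := (τr : ℂ)
    let τ₀ : ℂ := (τ₀r : ℂ)
    let a11 : Matrix (Fin n) (Fin n) ℂ :=
      ψ₂ • 1 - sxz • Matrix.vecMulVec (star z) (star ξ)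
        - star sxz • Matrix.vecMulVec ξ z + ψ₁ • Matrix.vecMulVec ξ (star ξ)
    let a12 : Matrix (Fin n) (Fin n) ℂ :=
      ψ₁ • Matrix.vecMulVec ξ (star z) + Matrix.vecMulVec (star z) ξ
        - sxz • Matrix.vecMulVec (star z) (star z)
    let a21 : Matrix (Fin n) (Fin n) ℂ :=
      ψ₁ • Matrix.vecMulVec z (star ξ) + Matrix.vecMulVec (star ξ) z
        - star sxz • Matrix.vecMulVec z z
    let a22 : Matrix (Fin n) (Fin n) ℂ := ψ₁ • (1 + Matrix.vecMulVec z (star z))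
    let A' : Matrix (Fin n ⊕ Fin n) (Fin n ⊕ Fin n) ℂ := Matrix.fromBlocks a11 a12 a21 a22
    let b : Fin n ⊕ Fin n → ℂ :=
      Sum.elim (fun i => ψ₂ * star (z i) - ψ₁ * star sxz * ξ i)
               (fun i => ψ₁ * (star (ξ i) - star sxz * z i))
    let S : Matrix (Fin n ⊕ Fin n) (Fin n ⊕ Fin n) ℂ := Matrix.fromBlocks 0 1 (-1) 0
    let A : Matrix (Fin n ⊕ Fin n) (Fin n ⊕ Fin n) ℂ :=
      ((τr ^ (-(1 : ℝ) / 2) : ℝ) : ℂ) • A'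
        - (((1 / 2 : ℝ) * τr ^ (-(3 : ℝ) / 2) : ℝ) : ℂ) • Matrix.vecMulVec b (star b)
    Aᵀ * S * A = S := by
  intro sxz ψ₁r ψ₂r τr τ₀r ψ₁ ψ₂ τ τ₀ a11 a12 a21 a22 A' b S A
  have hz0 : (0:ℝ) ≤ ∑ i, Complex.normSq (z i) :=
    Finset.sum_nonneg fun i _ => Complex.normSq_nonneg _
  have hx0 : (0:ℝ) ≤ ∑ i, Complex.normSq (ξ i) :=
    Finset.sum_nonneg fun i _ => Complex.normSq_nonneg _
  have hψ1 : (0:ℝ) < ψ₁r := by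
    show (0:ℝ) < (∑ i, Complex.normSq (z i)) + 1; linarith
  have hψ2 : (0:ℝ) < ψ₂r := by
    show (0:ℝ) < (∑ i, Complex.normSq (ξ i)) + Complex.normSq sxz
    rcases eq_or_ne sxz 0 with h | h
    · have hs' : ∑ i, ξ i * z i = s := by
        have h0 : s - ∑ i, ξ i * z i = 0 := h
        linear_combination -h0
      have hne : ∃ i, ξ i ≠ 0 := by
        by_contra hc; push_neg at hc
        exact hs (by rw [← hs']; simp [hc])
      obtain ⟨i, hi⟩ := hne
      have h3 : 0 < ∑ i, Complex.normSq (ξ i) :=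
        Finset.sum_pos' (fun j _ => Complex.normSq_nonneg _)
          ⟨i, Finset.mem_univ i, Complex.normSq_pos.mpr hi⟩
      have h4 := Complex.normSq_nonneg sxz
      linarith
    · have : 0 < Complex.normSq sxz := Complex.normSq_pos.mpr h
      linarith
  have hτ : (0:ℝ) < τr := mul_pos hψ1 hψ2
  have hrr3 : τr ^ (-(3:ℝ)/2) = (τr ^ (-(1:ℝ)/2))^3 := by
    rw [← Real.rpow_natCast (τr ^ (-(1:ℝ)/2)) 3, ← Real.rpow_mul hτ.le]
    norm_num
  have hrr2 : (τr ^ (-(1:ℝ)/2))^2 * τr = 1 := by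
    rw [← Real.rpow_natCast (τr ^ (-(1:ℝ)/2)) 2, ← Real.rpow_mul hτ.le]
    norm_num
    rw [Real.rpow_neg_one]
    exact inv_mul_cancel₀ hτ.ne'
  have hτψ : (τr : ℂ) = ψ₁ * ψ₂ := by
    show ((ψ₁r * ψ₂r : ℝ) : ℂ) = (ψ₁r : ℂ) * (ψ₂r : ℂ); push_cast; ring
  have hzd : z ⬝ᵥ star z = ψ₁ - 1 := by
    show z ⬝ᵥ star z = (((∑ i, Complex.normSq (z i)) + 1 : ℝ) : ℂ) - 1
    simp only [dotProduct, Pi.star_apply, Complex.star_def, Complex.mul_conj]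
    push_cast
    ring
  have hzd' : star z ⬝ᵥ z = ψ₁ - 1 := by rw [dotProduct_comm]; exact hzd
  have hxd : ξ ⬝ᵥ star ξ = ψ₂ - sxz * star sxz := by
    show ξ ⬝ᵥ star ξ
        = (((∑ i, Complex.normSq (ξ i)) + Complex.normSq sxz : ℝ) : ℂ) - sxz * star sxz
    simp only [dotProduct, Pi.star_apply, Complex.star_def, Complex.mul_conj]
    push_cast
    ring
  have hxd' : star ξ ⬝ᵥ ξ = ψ₂ - sxz * star sxz := by rw [dotProduct_comm]; exact hxd
  have hbe : b = Sum.elim (fun i => ψ₂ * (star z) i - ψ₁ * star sxz * ξ i)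
      (fun i => ψ₁ * ((star ξ) i - star sxz * z i)) := by
    funext i; cases i <;> rfl
  have hbs : star b = Sum.elim (fun i => ψ₂ * z i - ψ₁ * sxz * (star ξ) i)
      (fun i => ψ₁ * (ξ i - sxz * (star z) i)) := by
    funext i
    cases i with
    | inl i =>
        show star ((ψ₂r : ℂ) * star (z i) - (ψ₁r : ℂ) * star sxz * ξ i)
            = (ψ₂r : ℂ) * z i - (ψ₁r : ℂ) * sxz * star (ξ i)
        simp only [Complex.star_def, map_sub, _root_.map_mul, Complex.conj_conj,
          Complex.conj_ofReal]
    | inr i =>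
        show star ((ψ₁r : ℂ) * (star (ξ i) - star sxz * z i))
            = (ψ₁r : ℂ) * (ξ i - sxz * star (z i))
        simp only [Complex.star_def, map_sub, _root_.map_mul, Complex.conj_conj,
          Complex.conj_ofReal]
  have hBM : vecMulVec b (star b) = vecMulVec
      (Sum.elim (fun i => ψ₂ * (star z) i - ψ₁ * star sxz * ξ i)
        (fun i => ψ₁ * ((star ξ) i - star sxz * z i)))
      (Sum.elim (fun i => ψ₂ * z i - ψ₁ * sxz * (star ξ) i)
        (fun i => ψ₁ * (ξ i - sxz * (star z) i))) := by
    rw [← hbe, ← hbs]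
  have hSe : S = fromBlocks 0 1 (-1) 0 := rfl
  have hA'e : A' = fromBlocks
      (ψ₂ • 1 - sxz • vecMulVec (star z) (star ξ) - star sxz • vecMulVec ξ z
        + ψ₁ • vecMulVec ξ (star ξ))
      (ψ₁ • vecMulVec ξ (star z) + vecMulVec (star z) ξ - sxz • vecMulVec (star z) (star z))
      (ψ₁ • vecMulVec z (star ξ) + vecMulVec (star ξ) z - star sxz • vecMulVec z z)
      (ψ₁ • (1 + vecMulVec z (star z))) := rfl
  have K := key z (star z) ξ (star ξ) sxz (star sxz) ψ₁ ψ₂ A' (vecMulVec b (star b)) S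
    hA'e hBM hSe hzd hzd' hxd hxd'
  have hA : A = ((τr ^ (-(1:ℝ)/2) : ℝ) : ℂ) • A'
      - (((1/2 : ℝ) * τr ^ (-(3:ℝ)/2) : ℝ) : ℂ) • vecMulVec b (star b) := rfl
  set rc : ℂ := ((τr ^ (-(1:ℝ)/2) : ℝ) : ℂ) with hrc
  set chalf : ℂ := (((1/2 : ℝ) * τr ^ (-(3:ℝ)/2) : ℝ) : ℂ) with hchalf
  have hrc0 : rc ≠ 0 := by
    rw [hrc]
    exact_mod_cast (Real.rpow_pos_of_pos hτ _).ne'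
  have h1 : rc ^ 2 * (ψ₁ * ψ₂) = 1 := by
    rw [← hτψ, hrc, ← Complex.ofReal_pow, ← Complex.ofReal_mul, hrr2, Complex.ofReal_one]
  have hψinv : ψ₁ * ψ₂ = (rc ^ 2)⁻¹ :=
    eq_inv_of_mul_eq_one_right (by linear_combination h1)
  have hch : chalf = (2:ℂ)⁻¹ * rc ^ 3 := by
    rw [hchalf, hrc, hrr3]; push_cast; ring
  rw [hA]
  have expand : (rc • A' - chalf • vecMulVec b (star b))ᵀ * S
        * (rc • A' - chalf • vecMulVec b (star b))
      = (rc * rc) • (A'ᵀ * S * A') - (rc * chalf) • (A'ᵀ * S * vecMulVec b (star b))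
        - (chalf * rc) • ((vecMulVec b (star b))ᵀ * S * A')
        + (chalf * chalf) • ((vecMulVec b (star b))ᵀ * S * vecMulVec b (star b)) := by
    simp only [transpose_sub, transpose_smul, sub_mul, mul_sub, smul_mul_assoc, mul_smul_comm,
      smul_smul, smul_sub]
    module
  rw [expand]
  have step : (rc * rc) • (A'ᵀ * S * A') - (rc * chalf) • (A'ᵀ * S * vecMulVec b (star b))
        - (chalf * rc) • ((vecMulVec b (star b))ᵀ * S * A')
        + (chalf * chalf) • ((vecMulVec b (star b))ᵀ * S * vecMulVec b (star b))
      = rc ^ 6 • ((ψ₁ * ψ₂) ^ 2 • (A'ᵀ * S * A')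
          - ((ψ₁ * ψ₂) / 2) • (A'ᵀ * S * vecMulVec b (star b)
              + (vecMulVec b (star b))ᵀ * S * A')
          + (4:ℂ)⁻¹ • ((vecMulVec b (star b))ᵀ * S * vecMulVec b (star b))) := by
    rw [hch, hψinv]
    match_scalars <;> field_simp <;> ring
  rw [step, K, smul_smul]
  have hone : rc ^ 6 * (ψ₁ * ψ₂) ^ 3 = 1 := by
    rw [hψinv]; field_simp
  rw [hone, one_smul]
end

section
/- For every u ∈ ℂ, det(u·1ₙ + A) = u^{n−2}·( u² + u·trace(Λ) + det(Λ) ). -/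
open Matrix

theorem stmt_9 (n : ℕ) (hn : 2 ≤ n) (Z₁ Z₂ W₁ W₂ : Fin n → ℂ) :
    let A : Matrix (Fin n) (Fin n) ℂ := vecMulVec Z₁ W₁ + vecMulVec Z₂ W₂
    let Λ : Matrix (Fin 2) (Fin 2) ℂ :=
      !![W₁ ⬝ᵥ Z₁, W₁ ⬝ᵥ Z₂; W₂ ⬝ᵥ Z₁, W₂ ⬝ᵥ Z₂]
    ∀ u : ℂ, (u • (1 : Matrix (Fin n) (Fin n) ℂ) + A).det
      = u ^ (n - 2) * (u ^ 2 + u * Λ.trace + Λ.det) := by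
  intro A Λ u
  -- factor A = M * N with M : n×2, N : 2×n
  set M : Matrix (Fin n) (Fin 2) ℂ := Matrix.of (fun i j => ![Z₁, Z₂] j i) with hM
  set N : Matrix (Fin 2) (Fin n) ℂ := Matrix.of (fun j i => ![W₁, W₂] j i) with hN
  have hA : A = M * N := by
    ext i k
    simp [A, M, N, Matrix.mul_apply, vecMulVec_apply, Fin.sum_univ_two, mul_comm]
  have hNM : N * M = Λ := by
    ext i j
    fin_cases i <;> fin_cases j <;>
      simp [M, N, Λ, Matrix.mul_apply, dotProduct]
  rcases eq_or_ne u 0 with rfl | hu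
  · -- u = 0 case
    simp only [zero_smul, zero_add, zero_pow, zero_mul, add_zero, ne_eq]
    rcases eq_or_lt_of_le hn with h2 | h2
    · -- n = 2
      subst h2
      rw [hA, Matrix.det_mul_comm, hNM]
      simp
    · -- n > 2 : det A = 0
      have hdet : A.det = 0 := by
        by_contra h
        have hunit : IsUnit A := (Matrix.isUnit_iff_isUnit_det A).mpr (Ne.isUnit h)
        have hr : A.rank = n := by
          simpa using Matrix.rank_of_isUnit A hunit
        have hr2 : A.rank ≤ 2 := by
          calc A.rank = (M * N).rank := by rw [hA]
            _ ≤ M.rank := Matrix.rank_mul_le_left M N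
            _ ≤ Fintype.card (Fin 2) := Matrix.rank_le_card_width M
            _ = 2 := by simp
        omega
      rw [hdet]
      have : n - 2 ≠ 0 := by omega
      simp [this]
  · -- u ≠ 0 case
    have hdet1 : (u • (1 : Matrix (Fin n) (Fin n) ℂ)).det = u ^ n := by
      simp [Matrix.det_smul]
    have hunit : IsUnit (u • (1 : Matrix (Fin n) (Fin n) ℂ)).det := by
      rw [hdet1]; exact (pow_ne_zero n hu).isUnit
    have hinv : (u • (1 : Matrix (Fin n) (Fin n) ℂ))⁻¹ = u⁻¹ • 1 := by
      apply Matrix.inv_eq_right_inv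
      rw [smul_mul_assoc, mul_smul_comm, smul_smul, mul_inv_cancel₀ hu, one_smul, one_mul]
    rw [hA, Matrix.det_add_mul M N hunit, hinv, hdet1]
    have : N * (u⁻¹ • (1 : Matrix (Fin n) (Fin n) ℂ)) * M = u⁻¹ • Λ := by
      rw [Matrix.mul_smul, Matrix.mul_one, Matrix.smul_mul, hNM]
    rw [this]
    rw [Matrix.det_fin_two]
    have hΛ00 : Λ 0 0 = W₁ ⬝ᵥ Z₁ := rfl
    have hΛ01 : Λ 0 1 = W₁ ⬝ᵥ Z₂ := rfl
    have hΛ10 : Λ 1 0 = W₂ ⬝ᵥ Z₁ := rfl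
    have hΛ11 : Λ 1 1 = W₂ ⬝ᵥ Z₂ := rfl
    have htr : Λ.trace = W₁ ⬝ᵥ Z₁ + W₂ ⬝ᵥ Z₂ := by
      simp [Matrix.trace_fin_two, Λ]
    have hd : Λ.det = (W₁ ⬝ᵥ Z₁) * (W₂ ⬝ᵥ Z₂) - (W₁ ⬝ᵥ Z₂) * (W₂ ⬝ᵥ Z₁) := by
      simp [Matrix.det_fin_two, Λ]
    simp only [Matrix.add_apply, Matrix.smul_apply, Matrix.one_apply, hΛ00, hΛ01, hΛ10, hΛ11,
      htr, hd, if_pos rfl, smul_eq_mul]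
    have hne : (0 : Fin 2) ≠ 1 := by decide
    rw [if_neg hne, if_neg hne.symm, if_pos trivial]
    rw [show u ^ n = u ^ (n - 2) * u ^ 2 by rw [← pow_add]; congr 1; omega]
    field_simp
    ring
end

section
/- The matrix a₂₂ is invertible with a₂₂⁻¹ = ψ₁⁻¹·(1ₙ − ψ₁⁻¹·z·z*), and the Schur complement satisfies a₁₁ − a₁₂·a₂₂⁻¹·a₂₁ = ψ₂·1ₙ + ξᵀ·(ξ̄ − s̄·ψ₁⁻¹·zᵀ) + z̄·(m·zᵀ − s·ψ₁⁻¹·ξ̄), where m = ψ₁⁻²·(|s|² − ψ₁ψ₂). -/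
open Matrix

private lemma vmv_mul_vmv {n : ℕ} (u v w x : Fin n → ℂ) :
    vecMulVec u v * vecMulVec w x = (∑ i, v i * w i) • vecMulVec u x := by
  ext i j
  simp only [Matrix.mul_apply, Matrix.vecMulVec_apply, Matrix.smul_apply, smul_eq_mul,
    Finset.sum_mul]
  exact Finset.sum_congr rfl fun k _ => by ring

theorem stmt_12 (n : ℕ) (hn : 1 ≤ n) (s : ℂ) (z ξ : Fin n → ℂ) :
    let sxz : ℂ := s - ∑ i, ξ i * z i
    let ψ₁r : ℝ := (∑ i, Complex.normSq (z i)) + 1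
    let ψ₂r : ℝ := (∑ i, Complex.normSq (ξ i)) + Complex.normSq sxz
    let τr : ℝ := ψ₁r * ψ₂r
    let τ₀r : ℝ := Complex.normSq s
    let ψ₁ : ℂ := (ψ₁r : ℂ)
    let ψ₂ : ℂ := (ψ₂r : ℂ)
    let τ : ℂ := (τr : ℂ)
    let τ₀ : ℂ := (τ₀r : ℂ)
    let a11 : Matrix (Fin n) (Fin n) ℂ :=
      ψ₂ • 1 - sxz • Matrix.vecMulVec (star z) (star ξ)
        - star sxz • Matrix.vecMulVec ξ z + ψ₁ • Matrix.vecMulVec ξ (star ξ)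
    let a12 : Matrix (Fin n) (Fin n) ℂ :=
      ψ₁ • Matrix.vecMulVec ξ (star z) + Matrix.vecMulVec (star z) ξ
        - sxz • Matrix.vecMulVec (star z) (star z)
    let a21 : Matrix (Fin n) (Fin n) ℂ :=
      ψ₁ • Matrix.vecMulVec z (star ξ) + Matrix.vecMulVec (star ξ) z
        - star sxz • Matrix.vecMulVec z z
    let a22 : Matrix (Fin n) (Fin n) ℂ := ψ₁ • (1 + Matrix.vecMulVec z (star z))
    let A' : Matrix (Fin n ⊕ Fin n) (Fin n ⊕ Fin n) ℂ := Matrix.fromBlocks a11 a12 a21 a22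
    let b : Fin n ⊕ Fin n → ℂ :=
      Sum.elim (fun i => ψ₂ * star (z i) - ψ₁ * star sxz * ξ i)
               (fun i => ψ₁ * (star (ξ i) - star sxz * z i))
    let m : ℂ := ψ₁⁻¹ ^ 2 * (τ₀ - ψ₁ * ψ₂)
    IsUnit a22 ∧
      a22⁻¹ = ψ₁⁻¹ • ((1 : Matrix (Fin n) (Fin n) ℂ) - ψ₁⁻¹ • Matrix.vecMulVec z (star z)) ∧
      a11 - a12 * a22⁻¹ * a21
        = ψ₂ • 1 + Matrix.vecMulVec ξ (fun j => star (ξ j) - star s * ψ₁⁻¹ * z j)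
            + Matrix.vecMulVec (star z) (fun j => m * z j - s * ψ₁⁻¹ * star (ξ j)) := by
  intro sxz ψ₁r ψ₂r τr τ₀r ψ₁ ψ₂ τ τ₀ a11 a12 a21 a22 A' b m
  have hψ₁r : (0:ℝ) < ψ₁r := by
    have : (0:ℝ) ≤ ∑ i, Complex.normSq (z i) :=
      Finset.sum_nonneg fun i _ => Complex.normSq_nonneg _
    simp only [ψ₁r]; linarith
  have hψ₁ : ψ₁ ≠ 0 := by
    simp only [ψ₁, Ne, Complex.ofReal_eq_zero]; exact ne_of_gt hψ₁r
  have hp : (∑ i, star (z i) * z i) = ψ₁ - 1 := by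
    simp only [ψ₁, ψ₁r]
    push_cast
    rw [add_sub_cancel_right]
    exact Finset.sum_congr rfl fun i _ => (Complex.normSq_eq_conj_mul_self).symm
  have hc : (∑ i, ξ i * z i) = s - sxz := by
    show (∑ i, ξ i * z i) = s - (s - ∑ i, ξ i * z i)
    ring
  have hcc : (∑ i, star (z i) * star (ξ i)) = star s - star sxz := by
    have : (∑ i, star (z i) * star (ξ i)) = star (∑ i, ξ i * z i) := by
      rw [star_sum]; exact Finset.sum_congr rfl fun i _ => by rw [star_mul']; ring
    rw [this, hc, star_sub]
  have hq : (∑ i, ξ i * star (ξ i)) = ψ₂ - sxz * star sxz := by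
    simp only [ψ₂, ψ₂r]
    push_cast
    have h1 : sxz * star sxz = ((Complex.normSq sxz : ℝ) : ℂ) := by
      rw [show star sxz = (starRingEnd ℂ) sxz from rfl, Complex.mul_conj]
    rw [h1]
    rw [add_sub_cancel_right]
    exact Finset.sum_congr rfl fun i _ => by
      rw [show star (ξ i) = (starRingEnd ℂ) (ξ i) from rfl, Complex.mul_conj]
  have ht0 : τ₀ = s * star s := by
    rw [show star s = (starRingEnd ℂ) s from rfl, Complex.mul_conj]
  clear_value sxz ψ₁ ψ₂ τ₀
  have h1 : a22 * (ψ₁⁻¹ • ((1 : Matrix (Fin n) (Fin n) ℂ)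
      - ψ₁⁻¹ • Matrix.vecMulVec z (star z))) = 1 := by
    simp only [a22, Matrix.smul_mul, Matrix.mul_smul, Matrix.mul_sub, Matrix.sub_mul,
      Matrix.add_mul, Matrix.mul_add, Matrix.one_mul, Matrix.mul_one, vmv_mul_vmv, smul_smul,
      Pi.star_apply, hp]
    ext i j
    rcases eq_or_ne i j with rfl | hij
    · simp only [Matrix.add_apply, Matrix.sub_apply, Matrix.smul_apply, Matrix.one_apply_eq,
        Matrix.vecMulVec_apply, smul_eq_mul, Pi.star_apply]
      field_simp
      ring
    · simp only [Matrix.add_apply, Matrix.sub_apply, Matrix.smul_apply,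
        Matrix.one_apply_ne hij, Matrix.vecMulVec_apply, smul_eq_mul, Pi.star_apply]
      field_simp
      ring
  refine ⟨(Matrix.isUnit_iff_isUnit_det _).mpr (Matrix.isUnit_det_of_right_inverse h1), Matrix.inv_eq_right_inv h1, ?_⟩
  rw [Matrix.inv_eq_right_inv h1]
  simp only [a11, a12, a21, m, ht0, Matrix.smul_mul, Matrix.mul_smul, Matrix.mul_sub,
    Matrix.sub_mul, Matrix.add_mul, Matrix.mul_add, Matrix.one_mul, Matrix.mul_one,
    vmv_mul_vmv, smul_smul, Pi.star_apply, hp, hc, hcc, hq]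
  ext i j
  rcases eq_or_ne i j with rfl | hij
  · simp only [Matrix.add_apply, Matrix.sub_apply, Matrix.smul_apply, Matrix.one_apply_eq,
      Matrix.vecMulVec_apply, smul_eq_mul, Pi.star_apply]
    field_simp
    ring
  · simp only [Matrix.add_apply, Matrix.sub_apply, Matrix.smul_apply,
      Matrix.one_apply_ne hij, Matrix.vecMulVec_apply, smul_eq_mul, Pi.star_apply]
    field_simp
    ring
end

section
/- det( a₁₁ − a₁₂·a₂₂⁻¹·a₂₁ ) = ψ₁⁻²·ψ₂^{n−1}·( 2ψ₁ψ₂ − |s|² ), and det(a₂₂) = ψ₁^{n+1}. -/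
open Matrix

lemma vmv_mul_vmv_s13 {n : ℕ} (a b c d : Fin n → ℂ) :
    vecMulVec a b * vecMulVec c d = (∑ i, b i * c i) • vecMulVec a d := by
  ext i j
  simp only [Matrix.mul_apply, vecMulVec_apply, Matrix.smul_apply, smul_eq_mul,
    Finset.sum_mul]
  exact Finset.sum_congr rfl fun k _ => by ring

lemma det_rank_two (n : ℕ) (ψ : ℂ) (hψ : ψ ≠ 0) (a b p q : Fin n → ℂ) :
    (ψ • 1 + vecMulVec a p + vecMulVec b q).det
      = ψ ^ n * ψ⁻¹ ^ 2 * ((ψ + ∑ i, p i * a i) * (ψ + ∑ i, q i * b i)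
          - (∑ i, p i * b i) * (∑ i, q i * a i)) := by
  set U : Matrix (Fin n) (Fin 2) ℂ := Matrix.of fun i j => ![a i, b i] j with hU
  set W : Matrix (Fin 2) (Fin n) ℂ := Matrix.of fun j k => ![ψ⁻¹ * p k, ψ⁻¹ * q k] j with hW
  have key : ψ • 1 + vecMulVec a p + vecMulVec b q = ψ • (1 + U * W) := by
    ext i k
    simp only [Matrix.add_apply, Matrix.smul_apply, vecMulVec_apply, Matrix.mul_apply,
      Fin.sum_univ_two, hU, hW, Matrix.of_apply, Matrix.cons_val_zero, Matrix.cons_val_one,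
      Matrix.head_cons, smul_eq_mul, Matrix.one_apply, mul_add]
    by_cases h : i = k <;> simp [h] <;> field_simp <;> ring
  rw [key, Matrix.det_smul, Matrix.det_one_add_mul_comm, Fintype.card_fin]
  have hWU : ∀ i j, (W * U) i j = ψ⁻¹ * ∑ k, ![p, q] i k * ![a, b] j k := by
    intro i j
    simp only [Matrix.mul_apply, hU, hW, Matrix.of_apply, Finset.mul_sum]
    refine Finset.sum_congr rfl fun k _ => ?_
    fin_cases i <;> fin_cases j <;> simp <;> ring
  rw [Matrix.det_fin_two]
  simp only [Matrix.add_apply, Matrix.one_apply_eq, Matrix.one_apply_ne (by decide : (0:Fin 2) ≠ 1),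
    Matrix.one_apply_ne (by decide : (1:Fin 2) ≠ 0), hWU]
  simp only [Matrix.cons_val_zero, Matrix.cons_val_one, Matrix.head_cons]
  have hscal : ∀ A B C D : ℂ, (1 + ψ⁻¹ * A) * (1 + ψ⁻¹ * B) - (0 + ψ⁻¹ * C) * (0 + ψ⁻¹ * D)
      = ψ⁻¹ ^ 2 * ((ψ + A) * (ψ + B) - C * D) := by
    intro A B C D; field_simp; ring
  rw [hscal]; ring

set_option maxHeartbeats 2000000 in
theorem stmt_13 (n : ℕ) (hn : 1 ≤ n) (s : ℂ) (z ξ : Fin n → ℂ) :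
    let sxz : ℂ := s - ∑ i, ξ i * z i
    let ψ₁r : ℝ := (∑ i, Complex.normSq (z i)) + 1
    let ψ₂r : ℝ := (∑ i, Complex.normSq (ξ i)) + Complex.normSq sxz
    let τr : ℝ := ψ₁r * ψ₂r
    let τ₀r : ℝ := Complex.normSq s
    let ψ₁ : ℂ := (ψ₁r : ℂ)
    let ψ₂ : ℂ := (ψ₂r : ℂ)
    let τ : ℂ := (τr : ℂ)
    let τ₀ : ℂ := (τ₀r : ℂ)
    let a11 : Matrix (Fin n) (Fin n) ℂ :=
      ψ₂ • 1 - sxz • Matrix.vecMulVec (star z) (star ξ)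
        - star sxz • Matrix.vecMulVec ξ z + ψ₁ • Matrix.vecMulVec ξ (star ξ)
    let a12 : Matrix (Fin n) (Fin n) ℂ :=
      ψ₁ • Matrix.vecMulVec ξ (star z) + Matrix.vecMulVec (star z) ξ
        - sxz • Matrix.vecMulVec (star z) (star z)
    let a21 : Matrix (Fin n) (Fin n) ℂ :=
      ψ₁ • Matrix.vecMulVec z (star ξ) + Matrix.vecMulVec (star ξ) z
        - star sxz • Matrix.vecMulVec z z
    let a22 : Matrix (Fin n) (Fin n) ℂ := ψ₁ • (1 + Matrix.vecMulVec z (star z))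
    let A' : Matrix (Fin n ⊕ Fin n) (Fin n ⊕ Fin n) ℂ := Matrix.fromBlocks a11 a12 a21 a22
    let b : Fin n ⊕ Fin n → ℂ :=
      Sum.elim (fun i => ψ₂ * star (z i) - ψ₁ * star sxz * ξ i)
               (fun i => ψ₁ * (star (ξ i) - star sxz * z i))
    (a11 - a12 * a22⁻¹ * a21).det = ψ₁⁻¹ ^ 2 * ψ₂ ^ (n - 1) * (2 * ψ₁ * ψ₂ - τ₀) ∧
      a22.det = ψ₁ ^ (n + 1) := by
  intro sxz ψ₁r ψ₂r τr τ₀r ψ₁ ψ₂ τ τ₀ a11 a12 a21 a22 A' b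
  have hψ₁r : (0:ℝ) < ψ₁r := by
    have := Finset.sum_nonneg (fun i (_ : i ∈ Finset.univ) => Complex.normSq_nonneg (z i))
    simp only [ψ₁r]; linarith
  have hψ₁ : ψ₁ ≠ 0 := by
    simp only [ψ₁, ne_eq, Complex.ofReal_eq_zero]; linarith
  -- dot product facts
  have d1 : ∑ i, (star z) i * z i = ψ₁ - 1 := by
    have h : ∀ i, (star z) i * z i = ((Complex.normSq (z i) : ℝ) : ℂ) := by
      intro i
      rw [Pi.star_apply, Complex.star_def, Complex.normSq_eq_conj_mul_self]
    rw [Finset.sum_congr rfl fun i _ => h i]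
    show _ = ((((∑ i, Complex.normSq (z i)) + 1 : ℝ)) : ℂ) - 1
    push_cast
    ring
  have d2 : ∑ i, ξ i * z i = s - sxz := by
    show _ = s - (s - ∑ i, ξ i * z i)
    ring
  have d3 : ∑ i, (star z) i * (star ξ) i = star s - star sxz := by
    calc ∑ i, (star z) i * (star ξ) i = star (∑ i, ξ i * z i) := by
          rw [star_sum]
          exact Finset.sum_congr rfl fun i _ => (star_mul (ξ i) (z i)).symm
      _ = star s - star sxz := by rw [d2, star_sub]
  have d4 : ∑ i, ξ i * (star ξ) i = ψ₂ - sxz * star sxz := by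
    have h : ∀ i, ξ i * (star ξ) i = ((Complex.normSq (ξ i) : ℝ) : ℂ) := by
      intro i
      rw [Pi.star_apply, Complex.star_def, Complex.mul_conj]
    rw [Finset.sum_congr rfl fun i _ => h i]
    have hsx : sxz * star sxz = ((Complex.normSq sxz : ℝ) : ℂ) := by
      rw [Complex.star_def, Complex.mul_conj]
    rw [hsx]
    show _ = ((((∑ i, Complex.normSq (ξ i)) + Complex.normSq sxz : ℝ)) : ℂ) - _
    push_cast
    ring
  have ha22 : a22 = ψ₁ • (1 + Matrix.vecMulVec z (star z)) := rfl
  have hsxzdef : sxz = s - ∑ i, ξ i * z i := rfl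
  have hψ₂def : ψ₂ = ((ψ₂r : ℝ) : ℂ) := rfl
  have hψ₂rdef : ψ₂r = (∑ i, Complex.normSq (ξ i)) + Complex.normSq sxz := rfl
  have hτ₀ : τ₀ = s * star s := by
    show ((Complex.normSq s : ℝ) : ℂ) = _
    rw [Complex.star_def, Complex.mul_conj]
  have ha11 : a11 = ψ₂ • 1 - sxz • Matrix.vecMulVec (star z) (star ξ)
      - star sxz • Matrix.vecMulVec ξ z + ψ₁ • Matrix.vecMulVec ξ (star ξ) := rfl
  have ha12 : a12 = ψ₁ • Matrix.vecMulVec ξ (star z) + Matrix.vecMulVec (star z) ξ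
      - sxz • Matrix.vecMulVec (star z) (star z) := rfl
  have ha21 : a21 = ψ₁ • Matrix.vecMulVec z (star ξ) + Matrix.vecMulVec (star ξ) z
      - star sxz • Matrix.vecMulVec z z := rfl
  -- determinant of a22
  have hdet22 : a22.det = ψ₁ ^ (n + 1) := by
    rw [ha22, Matrix.det_smul, Fintype.card_fin, vecMulVec_eq (Fin 1),
      Matrix.det_one_add_replicateCol_mul_replicateRow]
    have : star z ⬝ᵥ z = ψ₁ - 1 := d1
    rw [this, pow_succ]
    ring
  refine ⟨?_, hdet22⟩
  clear_value sxz ψ₁r ψ₂r τr τ₀r ψ₁ ψ₂ τ τ₀ a11 a12 a21 a22 A' b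
  have hainv : a22⁻¹ = ψ₁⁻¹ • (1 : Matrix (Fin n) (Fin n) ℂ)
      - (ψ₁⁻¹ * ψ₁⁻¹) • Matrix.vecMulVec z (star z) := by
    apply Matrix.inv_eq_right_inv
    rw [ha22]
    simp only [Matrix.smul_mul, Matrix.mul_smul, Matrix.mul_sub, Matrix.sub_mul,
      Matrix.mul_add, Matrix.add_mul, Matrix.mul_one, Matrix.one_mul, vmv_mul_vmv_s13,
      smul_smul, d1, smul_sub, smul_add]
    match_scalars <;> (try ring) <;> (try field_simp) <;> (try ring) <;>
      (try (simp only [← mul_pow, mul_inv_cancel₀ hψ₁, one_pow]; try ring))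
  set γ : ℂ := ψ₁⁻¹ * (sxz * star sxz - ψ₂) + ψ₁⁻¹ * star sxz * (s - sxz)
      + ψ₁⁻¹ ^ 2 * s * (star s - star sxz) - ψ₁⁻¹ ^ 2 * s * star sxz * (ψ₁ - 1) with hγ
  set p : Fin n → ℂ := fun i => (star ξ) i - (ψ₁⁻¹ * star s) * z i with hp
  set q : Fin n → ℂ := fun i => (-(ψ₁⁻¹ * s)) * (star ξ) i + γ * z i with hq
  have hvp : Matrix.vecMulVec ξ p
      = Matrix.vecMulVec ξ (star ξ) - (ψ₁⁻¹ * star s) • Matrix.vecMulVec ξ z := by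
    ext i j
    simp only [hp, vecMulVec_apply, Matrix.sub_apply, Matrix.smul_apply, smul_eq_mul]
    ring
  have hvq : Matrix.vecMulVec (star z) q
      = (-(ψ₁⁻¹ * s)) • Matrix.vecMulVec (star z) (star ξ) + γ • Matrix.vecMulVec (star z) z := by
    ext i j
    simp only [hq, vecMulVec_apply, Matrix.add_apply, Matrix.smul_apply, smul_eq_mul]
    ring
  have ht : ψ₁ * ψ₁⁻¹ = 1 := mul_inv_cancel₀ hψ₁
  have hS : a11 - a12 * a22⁻¹ * a21
      = ψ₂ • 1 + Matrix.vecMulVec ξ p + Matrix.vecMulVec (star z) q := by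
    rw [hvp, hvq, hainv, ha11, ha12, ha21]
    simp only [Matrix.smul_mul, Matrix.mul_smul, Matrix.mul_sub, Matrix.sub_mul,
      Matrix.mul_add, Matrix.add_mul, Matrix.mul_one, Matrix.one_mul, vmv_mul_vmv_s13,
      smul_smul, d1, d2, d3, d4, smul_sub, smul_add]
    match_scalars <;> (try ring) <;>
      (try linear_combination (1 - ψ₁ + ψ₁ * ψ₁⁻¹ + (-2) * ψ₁ ^ 2 * ψ₁⁻¹ + ψ₁ ^ 3 * ψ₁⁻¹) * ht) <;>
      (try linear_combination (-(1 - ψ₁ + ψ₁ * ψ₁⁻¹ + (-2) * ψ₁ ^ 2 * ψ₁⁻¹ + ψ₁ ^ 3 * ψ₁⁻¹)) * ht) <;>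
      (try linear_combination ((-1) * ψ₁⁻¹ * (star s) * sxz + ψ₁ * ψ₁⁻¹ * sxz * (star sxz)) * ht) <;>
      (try linear_combination (-((-1) * ψ₁⁻¹ * (star s) * sxz + ψ₁ * ψ₁⁻¹ * sxz * (star sxz))) * ht) <;>
      (try linear_combination ((star sxz) + (-1) * ψ₁⁻¹ * (star s) + ψ₁ * ψ₁⁻¹ * (star sxz) + ψ₁ * ψ₁⁻¹ * (star s) + (-1) * ψ₁ ^ 2 * ψ₁⁻¹ * (star sxz)) * ht) <;>
      (try linear_combination (-((star sxz) + (-1) * ψ₁⁻¹ * (star s) + ψ₁ * ψ₁⁻¹ * (star sxz) + ψ₁ * ψ₁⁻¹ * (star s) + (-1) * ψ₁ ^ 2 * ψ₁⁻¹ * (star sxz))) * ht) <;>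
      (try linear_combination (sxz + (-1) * ψ₁⁻¹ * s + ψ₁ * ψ₁⁻¹ * sxz + ψ₁ * ψ₁⁻¹ * s + (-1) * ψ₁ ^ 2 * ψ₁⁻¹ * sxz) * ht) <;>
      (try linear_combination (-(sxz + (-1) * ψ₁⁻¹ * s + ψ₁ * ψ₁⁻¹ * sxz + ψ₁ * ψ₁⁻¹ * s + (-1) * ψ₁ ^ 2 * ψ₁⁻¹ * sxz)) * ht) <;>
      (try field_simp) <;> (try ring) <;>
      (try (simp only [← mul_pow, mul_inv_cancel₀ hψ₁, one_pow]; try ring))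
  by_cases hψ₂ : ψ₂ = 0
  · have hψ₂r' : (∑ i, Complex.normSq (ξ i)) + Complex.normSq sxz = 0 := by
      have h0 : ψ₂r = 0 := by
        rw [hψ₂def] at hψ₂
        exact_mod_cast hψ₂
      rw [← hψ₂rdef]
      exact h0
    have h1 : (0:ℝ) ≤ ∑ i, Complex.normSq (ξ i) :=
      Finset.sum_nonneg fun i _ => Complex.normSq_nonneg (ξ i)
    have h2 := Complex.normSq_nonneg sxz
    have h1' : ∑ i, Complex.normSq (ξ i) = 0 := by linarith
    have h2' : Complex.normSq sxz = 0 := by linarith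
    have hξ0 : ξ = 0 := by
      funext i
      exact Complex.normSq_eq_zero.mp
        ((Finset.sum_eq_zero_iff_of_nonneg fun j _ => Complex.normSq_nonneg (ξ j)).mp h1' i
          (Finset.mem_univ i))
    have hsxz0 : sxz = 0 := Complex.normSq_eq_zero.mp h2'
    have hs0 : s = 0 := by
      have h : s - ∑ i, ξ i * z i = 0 := hsxzdef ▸ hsxz0
      rw [hξ0] at h
      simpa using h
    have h11 : a11 = 0 := by
      rw [ha11, hξ0, hsxz0, hψ₂]
      ext i j
      simp [vecMulVec_apply]
    have h12 : a12 = 0 := by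
      rw [ha12, hξ0, hsxz0]
      ext i j
      simp [vecMulVec_apply]
    rw [h11, h12, Matrix.zero_mul, Matrix.zero_mul, sub_zero, (haveI : Nonempty (Fin n) := ⟨⟨0, hn⟩⟩; Matrix.det_zero (n := Fin n) (R := ℂ)),
      hψ₂, hτ₀, hs0]
    simp
  · rw [hS, det_rank_two n ψ₂ hψ₂ ξ (star z) p q]
    have e1 : ∑ i, p i * ξ i = (ψ₂ - sxz * star sxz) - (ψ₁⁻¹ * star s) * (s - sxz) := by
      have h : ∀ i, p i * ξ i = ξ i * (star ξ) i - (ψ₁⁻¹ * star s) * (ξ i * z i) := by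
        intro i; simp only [hp]; ring
      rw [Finset.sum_congr rfl fun i _ => h i, Finset.sum_sub_distrib, ← Finset.mul_sum, d4, d2]
    have e2 : ∑ i, p i * (star z) i = (star s - star sxz) - (ψ₁⁻¹ * star s) * (ψ₁ - 1) := by
      have h : ∀ i, p i * (star z) i
          = (star z) i * (star ξ) i - (ψ₁⁻¹ * star s) * ((star z) i * z i) := by
        intro i; simp only [hp]; ring
      rw [Finset.sum_congr rfl fun i _ => h i, Finset.sum_sub_distrib, ← Finset.mul_sum, d3, d1]
    have e3 : ∑ i, q i * ξ i = (-(ψ₁⁻¹ * s)) * (ψ₂ - sxz * star sxz) + γ * (s - sxz) := by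
      have h : ∀ i, q i * ξ i = (-(ψ₁⁻¹ * s)) * (ξ i * (star ξ) i) + γ * (ξ i * z i) := by
        intro i; simp only [hq]; ring
      rw [Finset.sum_congr rfl fun i _ => h i, Finset.sum_add_distrib,
        ← Finset.mul_sum, ← Finset.mul_sum, d4, d2]
    have e4 : ∑ i, q i * (star z) i = (-(ψ₁⁻¹ * s)) * (star s - star sxz) + γ * (ψ₁ - 1) := by
      have h : ∀ i, q i * (star z) i
          = (-(ψ₁⁻¹ * s)) * ((star z) i * (star ξ) i) + γ * ((star z) i * z i) := by
        intro i; simp only [hq]; ring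
      rw [Finset.sum_congr rfl fun i _ => h i, Finset.sum_add_distrib,
        ← Finset.mul_sum, ← Finset.mul_sum, d3, d1]
    rw [e1, e2, e3, e4, hτ₀, hγ]
    obtain ⟨m, rfl⟩ : ∃ m, n = m + 1 := ⟨n - 1, (Nat.succ_pred_eq_of_pos hn).symm⟩
    simp only [Nat.add_sub_cancel]
    rw [pow_succ]
    have hw : ψ₂ * ψ₂⁻¹ = 1 := mul_inv_cancel₀ hψ₂
    linear_combination (ψ₂ ^ 2 * ψ₂⁻¹ ^ 2 * sxz * (star sxz) * (ψ₂ ^ m) + (-2) * ψ₂ ^ 3 * ψ₂⁻¹ ^ 2 * (ψ₂ ^ m) + (-2) * ψ₁⁻¹ * ψ₂ * (ψ₂ ^ m) + (-1) * ψ₁⁻¹ * ψ₂ * ψ₂⁻¹ ^ 2 * s * (star s) * sxz * (star sxz) * (ψ₂ ^ m) + (-1) * ψ₁⁻¹ * ψ₂ * ψ₂⁻¹ ^ 2 * s ^ 2 * (star sxz) ^ 2 * (ψ₂ ^ m) + ψ₁⁻¹ * ψ₂ * ψ₂⁻¹ ^ 2 * s ^ 2 * (star s) * (star sxz) * (ψ₂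 ^ m) + 2 * ψ₁⁻¹ * ψ₂ ^ 2 * ψ₂⁻¹ ^ 2 * s * (star sxz) * (ψ₂ ^ m) + ψ₁⁻¹ * ψ₂ ^ 2 * ψ₂⁻¹ ^ 2 * s * (star s) * (ψ₂ ^ m) + ψ₁ * ψ₁⁻¹ * ψ₂ * ψ₂⁻¹ ^ 2 * s * sxz * (star sxz) ^ 2 * (ψ₂ ^ m) + (-2) * ψ₁ * ψ₁⁻¹ * ψ₂ ^ 2 * ψ₂⁻¹ ^ 2 * s * (star sxz) * (ψ₂ ^ m)) * ht + (2 * ψ₁⁻¹ * ψ₂ * (ψ₂ ^ m) + 2 * ψ₁⁻¹ * ψ₂ ^ 2 * ψ₂⁻¹ * (ψ₂ ^ m) + (-1) * ψ₁⁻¹ ^ 2 * s * (star s) * (ψ₂ ^ m) + (-1) * ψ₁⁻¹ ^ 2 * ψ₂ * ψ₂⁻¹ * s * (star s) * (ψ₂ ^ m)) * hw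
end

section
/- b₂*·a₂₂⁻¹·b₂ = τ − τ₀ (as a scalar, i.e. the 1×1 matrix with this entry), where τ = ψ₁ψ₂ and τ₀ = |s|². -/
open Matrix

theorem stmt_14 (n : ℕ) (hn : 1 ≤ n) (s : ℂ) (z ξ : Fin n → ℂ) :
    let sxz : ℂ := s - ∑ i, ξ i * z i
    let ψ₁r : ℝ := (∑ i, Complex.normSq (z i)) + 1
    let ψ₂r : ℝ := (∑ i, Complex.normSq (ξ i)) + Complex.normSq sxz
    let τr : ℝ := ψ₁r * ψ₂r
    let τ₀r : ℝ := Complex.normSq s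
    let ψ₁ : ℂ := (ψ₁r : ℂ)
    let ψ₂ : ℂ := (ψ₂r : ℂ)
    let τ : ℂ := (τr : ℂ)
    let τ₀ : ℂ := (τ₀r : ℂ)
    let a11 : Matrix (Fin n) (Fin n) ℂ :=
      ψ₂ • 1 - sxz • Matrix.vecMulVec (star z) (star ξ)
        - star sxz • Matrix.vecMulVec ξ z + ψ₁ • Matrix.vecMulVec ξ (star ξ)
    let a12 : Matrix (Fin n) (Fin n) ℂ :=
      ψ₁ • Matrix.vecMulVec ξ (star z) + Matrix.vecMulVec (star z) ξ
        - sxz • Matrix.vecMulVec (star z) (star z)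
    let a21 : Matrix (Fin n) (Fin n) ℂ :=
      ψ₁ • Matrix.vecMulVec z (star ξ) + Matrix.vecMulVec (star ξ) z
        - star sxz • Matrix.vecMulVec z z
    let a22 : Matrix (Fin n) (Fin n) ℂ := ψ₁ • (1 + Matrix.vecMulVec z (star z))
    let A' : Matrix (Fin n ⊕ Fin n) (Fin n ⊕ Fin n) ℂ := Matrix.fromBlocks a11 a12 a21 a22
    let b : Fin n ⊕ Fin n → ℂ :=
      Sum.elim (fun i => ψ₂ * star (z i) - ψ₁ * star sxz * ξ i)
               (fun i => ψ₁ * (star (ξ i) - star sxz * z i))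
    let b2 : Fin n → ℂ := fun i => ψ₁ * (star (ξ i) - star sxz * z i)
    star b2 ⬝ᵥ (a22⁻¹ *ᵥ b2) = τ - τ₀ := by
  intro sxz ψ₁r ψ₂r τr τ₀r ψ₁ ψ₂ τ τ₀ a11 a12 a21 a22 A' b b2
  have hψpos : (0:ℝ) < ψ₁r := by
    have : (0:ℝ) ≤ ∑ i, Complex.normSq (z i) :=
      Finset.sum_nonneg fun i _ => Complex.normSq_nonneg _
    simp only [ψ₁r]; linarith
  have hψ₁ne : ψ₁ ≠ 0 := by
    simp only [ψ₁]
    exact_mod_cast hψpos.ne'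
  set U : ℂ := ∑ i, z i * (starRingEnd ℂ) (z i) with hU
  set X : ℂ := ∑ i, ξ i * (starRingEnd ℂ) (ξ i) with hX
  set A : ℂ := ∑ i, ξ i * z i with hA
  set B : ℂ := ∑ i, (starRingEnd ℂ) (ξ i) * (starRingEnd ℂ) (z i) with hB
  have hBA : B = (starRingEnd ℂ) A := by
    rw [hB, hA, map_sum]
    exact Finset.sum_congr rfl fun i _ => (RingHom.map_mul _ _ _).symm
  have hψ₁U : ψ₁ = U + 1 := by
    simp only [ψ₁, ψ₁r, Complex.ofReal_add, Complex.ofReal_one, Complex.ofReal_sum, hU]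
    simp [← Complex.mul_conj]
  set c : ℂ := sxz with hc
  have hcs : c = s - A := rfl
  have hψ₂X : ψ₂ = X + c * (starRingEnd ℂ) c := by
    simp only [ψ₂, ψ₂r, Complex.ofReal_add, Complex.ofReal_sum, hX, hc]
    simp [← Complex.mul_conj]
  have hτ : τ = (U + 1) * (X + c * (starRingEnd ℂ) c) := by
    have : τ = ψ₁ * ψ₂ := by simp only [τ, τr, ψ₁, ψ₂, Complex.ofReal_mul]
    rw [this, hψ₁U, hψ₂X]
  have hτ₀ : τ₀ = s * (starRingEnd ℂ) s := by
    simp only [τ₀, τ₀r, ← Complex.mul_conj]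
  set Z : Matrix (Fin n) (Fin n) ℂ := Matrix.vecMulVec z (star z) with hZ
  -- the inverse of a22
  have hmul : a22 * (ψ₁⁻¹ • (1 - ψ₁⁻¹ • Z)) = 1 := by
    ext i j
    simp only [a22, hZ, smul_mul_assoc, mul_smul_comm, Matrix.smul_apply, smul_eq_mul,
      Matrix.mul_apply, Matrix.sub_apply, Matrix.add_apply, Matrix.one_apply,
      Matrix.vecMulVec_apply, Pi.star_apply, RCLike.star_def]
    have expand : ∀ k, ((if i = k then (1:ℂ) else 0) + z i * (starRingEnd ℂ) (z k)) *
        ((if k = j then (1:ℂ) else 0) - ψ₁⁻¹ * (z k * (starRingEnd ℂ) (z j)))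
        = (if i = k then (1:ℂ) else 0) * (if k = j then (1:ℂ) else 0)
          + (z i * (starRingEnd ℂ) (z k)) * (if k = j then (1:ℂ) else 0)
          - ψ₁⁻¹ * ((if i = k then (1:ℂ) else 0) * (z k * (starRingEnd ℂ) (z j)))
          - ψ₁⁻¹ * (z i * (starRingEnd ℂ) (z j)) * ((z k * (starRingEnd ℂ) (z k))) := by
      intro k; ring
    have hcancel : ψ₁ * ψ₁⁻¹ = 1 := mul_inv_cancel₀ hψ₁ne
    calc ∑ k, ψ₁ * ((if i = k then (1:ℂ) else 0) + z i * (starRingEnd ℂ) (z k)) *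
          (ψ₁⁻¹ * ((if k = j then (1:ℂ) else 0) - ψ₁⁻¹ * (z k * (starRingEnd ℂ) (z j))))
        = ∑ k, ((if i = k then (1:ℂ) else 0) * (if k = j then (1:ℂ) else 0)
          + (z i * (starRingEnd ℂ) (z k)) * (if k = j then (1:ℂ) else 0)
          - ψ₁⁻¹ * ((if i = k then (1:ℂ) else 0) * (z k * (starRingEnd ℂ) (z j)))
          - ψ₁⁻¹ * (z i * (starRingEnd ℂ) (z j)) * ((z k * (starRingEnd ℂ) (z k)))) := by
          refine Finset.sum_congr rfl fun k _ => ?_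
          rw [← expand k]
          calc ψ₁ * ((if i = k then (1:ℂ) else 0) + z i * (starRingEnd ℂ) (z k)) *
                (ψ₁⁻¹ * ((if k = j then (1:ℂ) else 0) - ψ₁⁻¹ * (z k * (starRingEnd ℂ) (z j))))
              = (ψ₁ * ψ₁⁻¹) * (((if i = k then (1:ℂ) else 0) + z i * (starRingEnd ℂ) (z k)) *
                ((if k = j then (1:ℂ) else 0) - ψ₁⁻¹ * (z k * (starRingEnd ℂ) (z j)))) := by ring
            _ = _ := by rw [hcancel, one_mul]
      _ = (if i = j then (1:ℂ) else 0) := by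
          rw [Finset.sum_sub_distrib, Finset.sum_sub_distrib, Finset.sum_add_distrib,
            ← Finset.mul_sum, ← Finset.mul_sum, ← hU]
          have h1 : ∑ k, (if i = k then (1:ℂ) else 0) * (if k = j then (1:ℂ) else 0)
              = (if i = j then (1:ℂ) else 0) := by simp [Finset.sum_ite_eq]
          have h2 : ∑ k, (z i * (starRingEnd ℂ) (z k)) * (if k = j then (1:ℂ) else 0)
              = z i * (starRingEnd ℂ) (z j) := by simp [Finset.sum_ite_eq]
          have h3 : ∑ k, (if i = k then (1:ℂ) else 0) * (z k * (starRingEnd ℂ) (z j))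
              = z i * (starRingEnd ℂ) (z j) := by simp [Finset.sum_ite_eq]
          rw [h1, h2, h3]
          have hUψ : U = ψ₁ - 1 := by rw [hψ₁U]; ring
          rw [hUψ]
          field_simp
          split <;> ring
  have hinv : a22⁻¹ = ψ₁⁻¹ • (1 - ψ₁⁻¹ • Z) := Matrix.inv_eq_right_inv hmul
  -- reduce the mulVec
  have hZv : Z *ᵥ b2 = (star z ⬝ᵥ b2) • z := by
    ext i
    simp only [hZ, Matrix.mulVec, Matrix.vecMulVec_apply, dotProduct,
      Pi.smul_apply, smul_eq_mul, Pi.star_apply, RCLike.star_def, Finset.sum_mul]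
    exact Finset.sum_congr rfl fun k _ => by ring
  have hvec : a22⁻¹ *ᵥ b2 = ψ₁⁻¹ • b2 - (ψ₁⁻¹ * ψ₁⁻¹ * (star z ⬝ᵥ b2)) • z := by
    rw [hinv]
    rw [Matrix.smul_mulVec, Matrix.sub_mulVec, Matrix.smul_mulVec, hZv]
    rw [Matrix.one_mulVec, smul_sub, smul_smul, smul_smul]
  -- dot product computations
  have hd1 : star z ⬝ᵥ b2 = ψ₁ * (B - (starRingEnd ℂ) c * U) := by
    simp only [dotProduct, b2, Pi.star_apply, RCLike.star_def]
    have : ∀ i, (starRingEnd ℂ) (z i) * (ψ₁ * ((starRingEnd ℂ) (ξ i) - (starRingEnd ℂ) sxz * z i))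
        = ψ₁ * ((starRingEnd ℂ) (ξ i) * (starRingEnd ℂ) (z i))
          - ψ₁ * (starRingEnd ℂ) sxz * (z i * (starRingEnd ℂ) (z i)) := fun i => by ring
    simp only [← hc] at this
    simp only [this, Finset.sum_sub_distrib, ← Finset.mul_sum, ← hB, ← hU, ← hc]
    ring
  have hd2 : star b2 ⬝ᵥ b2 = ψ₁ * ψ₁ *
      (X - (starRingEnd ℂ) c * A - c * B + c * (starRingEnd ℂ) c * U) := by
    simp only [dotProduct, b2, Pi.star_apply, RCLike.star_def]
    have hψc : (starRingEnd ℂ) ψ₁ = ψ₁ := Complex.conj_ofReal _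
    have : ∀ i, (starRingEnd ℂ) (ψ₁ * ((starRingEnd ℂ) (ξ i) - (starRingEnd ℂ) sxz * z i)) *
        (ψ₁ * ((starRingEnd ℂ) (ξ i) - (starRingEnd ℂ) sxz * z i))
        = ψ₁ * ψ₁ * (ξ i * (starRingEnd ℂ) (ξ i))
          - (ψ₁ * ψ₁ * (starRingEnd ℂ) sxz) * (ξ i * z i)
          - (ψ₁ * ψ₁ * sxz) * ((starRingEnd ℂ) (ξ i) * (starRingEnd ℂ) (z i))
          + (ψ₁ * ψ₁ * sxz * (starRingEnd ℂ) sxz) * (z i * (starRingEnd ℂ) (z i)) := by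
      intro i
      simp only [_root_.map_mul, _root_.map_sub, Complex.conj_conj, hψc]
      ring
    simp only [← hc] at this
    simp only [this, Finset.sum_add_distrib, Finset.sum_sub_distrib, ← Finset.mul_sum,
      ← hX, ← hA, ← hB, ← hU, ← hc]
    ring
  have hd3 : star b2 ⬝ᵥ z = ψ₁ * (A - c * U) := by
    simp only [dotProduct, Pi.star_apply, b2, RCLike.star_def]
    have hψc : (starRingEnd ℂ) ψ₁ = ψ₁ := Complex.conj_ofReal _
    have : ∀ i, (starRingEnd ℂ) (ψ₁ * ((starRingEnd ℂ) (ξ i) - (starRingEnd ℂ) sxz * z i)) * z i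
        = ψ₁ * (ξ i * z i) - (ψ₁ * sxz) * (z i * (starRingEnd ℂ) (z i)) := by
      intro i
      simp only [_root_.map_mul, _root_.map_sub, Complex.conj_conj, hψc]
      ring
    simp only [← hc] at this
    simp only [this, Finset.sum_sub_distrib, ← Finset.mul_sum, ← hA, ← hU, ← hc]
    ring
  rw [hvec, dotProduct_sub, dotProduct_smul, dotProduct_smul,
    smul_eq_mul, smul_eq_mul, hd1, hd2, hd3, hτ, hτ₀]
  have hcc : (starRingEnd ℂ) c = (starRingEnd ℂ) s - B := by
    rw [hc, hBA]; simp [sxz, hA]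
  rw [hψ₁U] at hψ₁ne ⊢
  rw [hcs, hcc]
  field_simp
  ring
end

section
/- b₁ − a₁₂·a₂₂⁻¹·b₂ = s̄·ψ₁⁻¹·( s·z̄ − ψ₁·ξᵀ ). -/
open Matrix

private lemma vmv_mulVec (n : ℕ) (u v w : Fin n → ℂ) :
    Matrix.vecMulVec u v *ᵥ w = (∑ j, v j * w j) • u := by
  funext i
  simp only [Matrix.mulVec, dotProduct, Matrix.vecMulVec_apply, Pi.smul_apply,
    smul_eq_mul, Finset.sum_mul]
  exact Finset.sum_congr rfl fun j _ => by ring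

private lemma vmv_mul_vmv_s15 (n : ℕ) (u v u' v' : Fin n → ℂ) :
    Matrix.vecMulVec u v * Matrix.vecMulVec u' v' = (∑ j, v j * u' j) • Matrix.vecMulVec u v' := by
  ext i j
  simp only [Matrix.mul_apply, Matrix.vecMulVec_apply, Matrix.smul_apply, smul_eq_mul,
    Finset.sum_mul]
  exact Finset.sum_congr rfl fun k _ => by ring

theorem stmt_15 (n : ℕ) (hn : 1 ≤ n) (s : ℂ) (z ξ : Fin n → ℂ) :
    let sxz : ℂ := s - ∑ i, ξ i * z i
    let ψ₁r : ℝ := (∑ i, Complex.normSq (z i)) + 1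
    let ψ₂r : ℝ := (∑ i, Complex.normSq (ξ i)) + Complex.normSq sxz
    let τr : ℝ := ψ₁r * ψ₂r
    let τ₀r : ℝ := Complex.normSq s
    let ψ₁ : ℂ := (ψ₁r : ℂ)
    let ψ₂ : ℂ := (ψ₂r : ℂ)
    let τ : ℂ := (τr : ℂ)
    let τ₀ : ℂ := (τ₀r : ℂ)
    let a11 : Matrix (Fin n) (Fin n) ℂ :=
      ψ₂ • 1 - sxz • Matrix.vecMulVec (star z) (star ξ)
        - star sxz • Matrix.vecMulVec ξ z + ψ₁ • Matrix.vecMulVec ξ (star ξ)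
    let a12 : Matrix (Fin n) (Fin n) ℂ :=
      ψ₁ • Matrix.vecMulVec ξ (star z) + Matrix.vecMulVec (star z) ξ
        - sxz • Matrix.vecMulVec (star z) (star z)
    let a21 : Matrix (Fin n) (Fin n) ℂ :=
      ψ₁ • Matrix.vecMulVec z (star ξ) + Matrix.vecMulVec (star ξ) z
        - star sxz • Matrix.vecMulVec z z
    let a22 : Matrix (Fin n) (Fin n) ℂ := ψ₁ • (1 + Matrix.vecMulVec z (star z))
    let A' : Matrix (Fin n ⊕ Fin n) (Fin n ⊕ Fin n) ℂ := Matrix.fromBlocks a11 a12 a21 a22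
    let b : Fin n ⊕ Fin n → ℂ :=
      Sum.elim (fun i => ψ₂ * star (z i) - ψ₁ * star sxz * ξ i)
               (fun i => ψ₁ * (star (ξ i) - star sxz * z i))
    let b1 : Fin n → ℂ := fun i => ψ₂ * star (z i) - ψ₁ * star sxz * ξ i
    let b2 : Fin n → ℂ := fun i => ψ₁ * (star (ξ i) - star sxz * z i)
    b1 - (a12 * a22⁻¹) *ᵥ b2 = fun i => star s * ψ₁⁻¹ * (s * star (z i) - ψ₁ * ξ i) := by
  intro sxz ψ₁r ψ₂r τr τ₀r ψ₁ ψ₂ τ τ₀ a11 a12 a21 a22 A' b b1 b2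
  -- basic scalar facts
  set α : ℂ := ∑ i, ξ i * z i with hα
  have hψ₁pos : (0:ℝ) < ψ₁r := by
    have : (0:ℝ) ≤ ∑ i, Complex.normSq (z i) :=
      Finset.sum_nonneg fun i _ => Complex.normSq_nonneg _
    simp only [ψ₁r]; linarith
  have hψ₁0 : ψ₁ ≠ 0 := by
    simp only [ψ₁, Complex.ofReal_ne_zero]; exact ne_of_gt hψ₁pos
  have hzz : (∑ j, star (z j) * z j) = ψ₁ - 1 := by
    have h : ∀ j : Fin n, star (z j) * z j = (Complex.normSq (z j) : ℂ) := fun j => by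
      rw [Complex.star_def, mul_comm, Complex.mul_conj]
    simp only [h, ψ₁, ψ₁r]
    push_cast
    ring
  have hξξ : (∑ j, ξ j * star (ξ j)) = ((∑ i, Complex.normSq (ξ i) : ℝ) : ℂ) := by
    have h : ∀ j : Fin n, ξ j * star (ξ j) = (Complex.normSq (ξ j) : ℂ) := fun j => by
      rw [Complex.star_def, Complex.mul_conj]
    rw [Finset.sum_congr rfl fun j _ => h j]
    push_cast
    ring
  have hconj : (∑ j, star (z j) * star (ξ j)) = star α := by
    rw [hα, star_sum]
    exact Finset.sum_congr rfl fun j _ => by rw [star_mul']; ring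
  have hP2 : Matrix.vecMulVec z (star z) * Matrix.vecMulVec z (star z)
      = (ψ₁ - 1) • Matrix.vecMulVec z (star z) := by
    rw [vmv_mul_vmv_s15]
    congr 1
  -- the inverse of a22
  have hInv : a22⁻¹ = ψ₁⁻¹ • ((1 : Matrix (Fin n) (Fin n) ℂ)
      - ψ₁⁻¹ • Matrix.vecMulVec z (star z)) := by
    apply Matrix.inv_eq_right_inv
    simp only [a22, Matrix.smul_mul, Matrix.mul_smul, smul_smul, mul_inv_cancel₀ hψ₁0, one_smul,
      mul_sub, sub_mul, add_mul, mul_one, one_mul, Matrix.mul_smul, hP2, smul_smul]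
    have hPP : Matrix.vecMulVec z (star z) + (ψ₁ - 1) • Matrix.vecMulVec z (star z)
        = ψ₁ • Matrix.vecMulVec z (star z) := by module
    rw [inv_mul_cancel₀ hψ₁0, one_smul, hPP, smul_add, add_sub_cancel_right, smul_smul,
      inv_mul_cancel₀ hψ₁0, one_smul]
  -- compute a22⁻¹ *ᵥ b2
  have hsum1 : (∑ j, star (z j) * b2 j) = ψ₁ * (star α - star sxz * (ψ₁ - 1)) := by
    have : ∀ j : Fin n, star (z j) * b2 j
        = ψ₁ * (star (z j) * star (ξ j)) - (ψ₁ * star sxz) * (star (z j) * z j) := by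
      intro j; simp only [b2]; ring
    rw [Finset.sum_congr rfl fun j _ => this j, Finset.sum_sub_distrib, ← Finset.mul_sum,
      ← Finset.mul_sum, hconj, hzz]
    ring
  have hw : a22⁻¹ *ᵥ b2 = fun i => star (ξ i) - ψ₁⁻¹ * star s * z i := by
    rw [hInv, Matrix.smul_mulVec, Matrix.sub_mulVec, Matrix.one_mulVec,
      Matrix.smul_mulVec, vmv_mulVec]
    funext i
    simp only [Pi.smul_apply, Pi.sub_apply, smul_eq_mul, Pi.star_apply]
    rw [hsum1]
    have hs : star sxz = star s - star α := by
      simp only [sxz, hα, star_sub]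
    simp only [b2, hs]
    field_simp
    ring
  -- final computation
  set w : Fin n → ℂ := fun i => star (ξ i) - ψ₁⁻¹ * star s * z i with hwdef
  have hd1 : (∑ j, star (z j) * w j) = star α - ψ₁⁻¹ * star s * (ψ₁ - 1) := by
    have : ∀ j : Fin n, star (z j) * w j
        = star (z j) * star (ξ j) - (ψ₁⁻¹ * star s) * (star (z j) * z j) := by
      intro j; simp only [hwdef]; ring
    rw [Finset.sum_congr rfl fun j _ => this j, Finset.sum_sub_distrib, ← Finset.mul_sum,
      hconj, hzz]
  have hd2 : (∑ j, ξ j * w j)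
      = ((∑ i, Complex.normSq (ξ i) : ℝ) : ℂ) - ψ₁⁻¹ * star s * α := by
    have : ∀ j : Fin n, ξ j * w j
        = ξ j * star (ξ j) - (ψ₁⁻¹ * star s) * (ξ j * z j) := by
      intro j; simp only [hwdef]; ring
    rw [Finset.sum_congr rfl fun j _ => this j, Finset.sum_sub_distrib, ← Finset.mul_sum,
      hξξ, ← hα]
  have hψ₂ : ψ₂ = ((∑ i, Complex.normSq (ξ i) : ℝ) : ℂ) + sxz * star sxz := by
    simp only [ψ₂, ψ₂r, Complex.star_def, Complex.mul_conj]
    push_cast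
    ring
  have hsxz : sxz = s - α := by simp only [sxz, hα]
  have hstep : (a12 * a22⁻¹) *ᵥ b2 = a12 *ᵥ (a22⁻¹ *ᵥ b2) := by
    rw [Matrix.mulVec_mulVec]
  rw [hstep, hw]
  simp only [a12, Matrix.add_mulVec, Matrix.sub_mulVec, Matrix.smul_mulVec, vmv_mulVec]
  funext i
  simp only [Pi.sub_apply, Pi.add_apply, Pi.smul_apply, smul_eq_mul, Pi.star_apply]
  rw [hd1, hd2]
  simp only [b1, hψ₂, hsxz, star_sub]
  have hsα : star sxz = star s - star α := by rw [hsxz, star_sub]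
  field_simp
  ring
end

section
/- a₁₁ᵀ·a₂₁ − a₂₁ᵀ·a₁₁ = ( s_xz·conj(ξz) − ‖ξ‖² )·( z·ξ̄ − ξ*·zᵀ ). (This is the (1,1)-block of A'ᵀ·S·A' for the 2n×2n matrix A' with blocks [[a₁₁,a₁₂],[a₂₁,a₂₂]] and S = [[0,1ₙ],[−1ₙ,0]].) -/
open Matrix

private lemma vmvT {n : ℕ} (a b : Fin n → ℂ) :
    (Matrix.vecMulVec a b)ᵀ = Matrix.vecMulVec b a := by
  ext i j; simp [Matrix.vecMulVec_apply, mul_comm]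

private lemma vmv_mul_s18 {n : ℕ} (a b c d : Fin n → ℂ) :
    Matrix.vecMulVec a b * Matrix.vecMulVec c d
      = (∑ k, b k * c k) • Matrix.vecMulVec a d := by
  ext i j
  simp only [Matrix.mul_apply, Matrix.vecMulVec_apply, Matrix.smul_apply,
    smul_eq_mul, Finset.sum_mul]
  exact Finset.sum_congr rfl fun k _ => by ring

theorem stmt_18 (n : ℕ) (hn : 1 ≤ n) (s : ℂ) (z ξ : Fin n → ℂ) :
    let sxz : ℂ := s - ∑ i, ξ i * z i
    let ψ₁r : ℝ := (∑ i, Complex.normSq (z i)) + 1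
    let ψ₂r : ℝ := (∑ i, Complex.normSq (ξ i)) + Complex.normSq sxz
    let τr : ℝ := ψ₁r * ψ₂r
    let τ₀r : ℝ := Complex.normSq s
    let ψ₁ : ℂ := (ψ₁r : ℂ)
    let ψ₂ : ℂ := (ψ₂r : ℂ)
    let τ : ℂ := (τr : ℂ)
    let τ₀ : ℂ := (τ₀r : ℂ)
    let a11 : Matrix (Fin n) (Fin n) ℂ :=
      ψ₂ • 1 - sxz • Matrix.vecMulVec (star z) (star ξ)
        - star sxz • Matrix.vecMulVec ξ z + ψ₁ • Matrix.vecMulVec ξ (star ξ)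
    let a12 : Matrix (Fin n) (Fin n) ℂ :=
      ψ₁ • Matrix.vecMulVec ξ (star z) + Matrix.vecMulVec (star z) ξ
        - sxz • Matrix.vecMulVec (star z) (star z)
    let a21 : Matrix (Fin n) (Fin n) ℂ :=
      ψ₁ • Matrix.vecMulVec z (star ξ) + Matrix.vecMulVec (star ξ) z
        - star sxz • Matrix.vecMulVec z z
    let a22 : Matrix (Fin n) (Fin n) ℂ := ψ₁ • (1 + Matrix.vecMulVec z (star z))
    let A' : Matrix (Fin n ⊕ Fin n) (Fin n ⊕ Fin n) ℂ := Matrix.fromBlocks a11 a12 a21 a22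
    let b : Fin n ⊕ Fin n → ℂ :=
      Sum.elim (fun i => ψ₂ * star (z i) - ψ₁ * star sxz * ξ i)
               (fun i => ψ₁ * (star (ξ i) - star sxz * z i))
    let ξn : ℂ := ((∑ i, Complex.normSq (ξ i) : ℝ) : ℂ)
    a11ᵀ * a21 - a21ᵀ * a11
      = (sxz * star (∑ i, ξ i * z i) - ξn) •
          (Matrix.vecMulVec z (star ξ) - Matrix.vecMulVec (star ξ) z) := by
  intro sxz ψ₁r ψ₂r τr τ₀r ψ₁ ψ₂ τ τ₀ a11 a12 a21 a22 A' b ξn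
  have hψ₁ : ψ₁ = (∑ k, z k * star (z k)) + 1 := by
    simp only [ψ₁, ψ₁r]
    push_cast
    simp [Complex.mul_conj]
  have hψ₂ : ψ₂ = (∑ k, ξ k * star (ξ k)) + sxz * star sxz := by
    simp only [ψ₂, ψ₂r]
    push_cast
    simp [Complex.mul_conj]
  have hξn : ξn = ∑ k, ξ k * star (ξ k) := by
    simp only [ξn]
    push_cast
    simp [Complex.mul_conj]
  have hstar : star sxz = star s - ∑ k, star (z k) * star (ξ k) := by
    simp only [sxz, star_sub, star_sum]
    congr 1
    exact Finset.sum_congr rfl fun k _ => by simp [mul_comm]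
  have hstarA : star (∑ i, ξ i * z i) = ∑ k, star (z k) * star (ξ k) := by
    rw [star_sum]
    exact Finset.sum_congr rfl fun k _ => by simp [mul_comm]
  simp only [a11, a21]
  simp only [Matrix.transpose_add, Matrix.transpose_sub, Matrix.transpose_smul,
    Matrix.transpose_one, vmvT,
    Matrix.add_mul, Matrix.sub_mul, Matrix.mul_add, Matrix.mul_sub,
    Matrix.smul_mul, Matrix.mul_smul, Matrix.one_mul, Matrix.mul_one,
    vmv_mul_s18, smul_smul]
  ext i j
  simp only [Matrix.sub_apply, Matrix.add_apply, Matrix.smul_apply,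
    Matrix.vecMulVec_apply, Pi.star_apply, smul_eq_mul]
  rw [hψ₁, hψ₂, hξn, hstar, hstarA]
  have hC : (∑ k, star (z k) * z k) = ∑ k, z k * star (z k) :=
    Finset.sum_congr rfl fun k _ => mul_comm _ _
  have hD : (∑ k, star (ξ k) * ξ k) = ∑ k, ξ k * star (ξ k) :=
    Finset.sum_congr rfl fun k _ => mul_comm _ _
  have hB : (∑ k, star (z k) * star (ξ k)) = ∑ k, star (ξ k) * star (z k) :=
    Finset.sum_congr rfl fun k _ => mul_comm _ _
  have hA : (∑ k, ξ k * z k) = ∑ k, z k * ξ k :=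
    Finset.sum_congr rfl fun k _ => mul_comm _ _
  rw [hC, hD, hB, hA]
  ring
end
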